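/- arXiv:1312.0876 — 8 statements merged into one kernel-verified Lean document; each statement's English description precedes it below -/
import Mathlib

section
/- Let k > 0, α < 0, t₀ ≥ 0 and y₀ > 0, and set t̄ = t₀ + (1/k)·ln((y₀² − 2α/k)/(−2α/k)). Then the radicand R(t) = y₀² e^{−k(t−t₀)} + (2α/k)(1 − e^{−k(t−t₀)}) satisfies R(t) > 0 for t₀ ≤ t < t̄ and R(t̄) = 0; hence the function y⁰(t) = R(t)^{1/2} satisfies y⁰(t) > 0 on [t₀, t̄) and y⁰(t̄) = 0, and moreover (y⁰)′(t) → −∞ as t → t̄ from the left. -/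
open Real Filter

theorem stmt_4 (k α t₀ y₀ : ℝ) (hk : 0 < k) (hα : α < 0) (ht₀ : 0 ≤ t₀) (hy₀ : 0 < y₀) :
    let tbar : ℝ := t₀ + 1 / k * Real.log ((y₀ ^ 2 - 2 * α / k) / (-(2 * α) / k))
    let R : ℝ → ℝ := fun t => y₀ ^ 2 * Real.exp (-(k * (t - t₀))) +
      2 * α / k * (1 - Real.exp (-(k * (t - t₀))))
    let y : ℝ → ℝ := fun t => Real.sqrt (R t)
    (∀ t, t₀ ≤ t → t < tbar → 0 < R t) ∧ R tbar = 0 ∧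
    (∀ t, t₀ ≤ t → t < tbar → 0 < y t) ∧ y tbar = 0 ∧
    Filter.Tendsto (deriv y) (nhdsWithin tbar (Set.Iio tbar)) Filter.atBot := by
  intro tbar R y
  have hk' : k ≠ 0 := ne_of_gt hk
  have hB : 2 * α / k < 0 := div_neg_of_neg_of_pos (by linarith) hk
  have hA : 0 < y₀ ^ 2 - 2 * α / k := by nlinarith [pow_pos hy₀ 2]
  have hq : 0 < (y₀ ^ 2 - 2 * α / k) / (-(2 * α) / k) := by
    apply div_pos hA
    have : -(2 * α) / k = -(2 * α / k) := by ring
    rw [this]; linarith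
  -- key exponential value at tbar
  have hexp : Real.exp (-(k * (tbar - t₀))) = (-(2 * α) / k) / (y₀ ^ 2 - 2 * α / k) := by
    have h1 : -(k * (tbar - t₀)) = -Real.log ((y₀ ^ 2 - 2 * α / k) / (-(2 * α) / k)) := by
      show -(k * (t₀ + 1 / k * Real.log _ - t₀)) = _
      field_simp
      ring
    rw [h1, Real.exp_neg, Real.exp_log hq, inv_div]
  have hRtbar : R tbar = 0 := by
    show y₀ ^ 2 * Real.exp (-(k * (tbar - t₀))) + 2 * α / k * (1 - Real.exp (-(k * (tbar - t₀)))) = 0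
    rw [hexp]
    have h2 : y₀ ^ 2 * k ^ 2 - α * k * 2 ≠ 0 := by nlinarith [pow_pos hy₀ 2, pow_pos hk 2]
    have := hA.ne'
    have hD : y₀ ^ 2 * k - 2 * α ≠ 0 := by nlinarith [pow_pos hy₀ 2, mul_pos (pow_pos hy₀ 2) hk]
    field_simp
    ring
  -- positivity of R before tbar
  have hRpos : ∀ t, t < tbar → 0 < R t := by
    intro t ht
    have hlt : Real.exp (-(k * (tbar - t₀))) < Real.exp (-(k * (t - t₀))) := by
      apply Real.exp_lt_exp.mpr; nlinarith
    have key : 0 < (y₀ ^ 2 - 2 * α / k) *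
        (Real.exp (-(k * (t - t₀))) - Real.exp (-(k * (tbar - t₀)))) :=
      mul_pos hA (sub_pos.mpr hlt)
    have h0 := hRtbar
    simp only [R] at h0 ⊢
    nlinarith [key, h0]
  have hytbar : y tbar = 0 := by
    show Real.sqrt (R tbar) = 0
    rw [hRtbar, Real.sqrt_zero]
  -- derivative of R
  have hRderiv : ∀ t, HasDerivAt R ((y₀ ^ 2 - 2 * α / k) * (-k) * Real.exp (-(k * (t - t₀)))) t := by
    intro t
    have h1 : HasDerivAt (fun s : ℝ => -(k * (s - t₀))) (-k) t := by
      have := ((hasDerivAt_id t).sub_const t₀).const_mul (-k)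
      simpa [neg_mul] using this
    have hE := h1.exp
    have := (hE.const_mul (y₀ ^ 2)).add (((hasDerivAt_const t (1:ℝ)).sub hE).const_mul (2 * α / k))
    convert this using 1
    · rfl
    · rfl
    · rfl
    · ring
  -- tendsto of numerator
  have hnumval : (y₀ ^ 2 - 2 * α / k) * (-k) * Real.exp (-(k * (tbar - t₀))) = 2 * α := by
    have h3 : y₀ ^ 2 * k ^ 3 - k ^ 2 * α * 2 ≠ 0 := by
      nlinarith [pow_pos hy₀ 2, pow_pos hk 2, pow_pos hk 3]
    have := hA.ne'
    have hD : y₀ ^ 2 * k - 2 * α ≠ 0 := by nlinarith [pow_pos hy₀ 2, mul_pos (pow_pos hy₀ 2) hk]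
    rw [hexp]; field_simp
  have hcontE : Continuous fun t : ℝ => Real.exp (-(k * (t - t₀))) := by fun_prop
  have hnum : Tendsto (fun t => (y₀ ^ 2 - 2 * α / k) * (-k) * Real.exp (-(k * (t - t₀))))
      (nhdsWithin tbar (Set.Iio tbar)) (nhds (2 * α)) := by
    have : Continuous fun t : ℝ => (y₀ ^ 2 - 2 * α / k) * (-k) * Real.exp (-(k * (t - t₀))) := by
      fun_prop
    have h := this.tendsto tbar
    rw [hnumval] at h
    exact h.mono_left nhdsWithin_le_nhds
  have hcontR : Continuous R := by fun_prop
  have hden : Tendsto (fun t => 2 * Real.sqrt (R t)) (nhdsWithin tbar (Set.Iio tbar))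
      (nhdsWithin 0 (Set.Ioi 0)) := by
    rw [tendsto_nhdsWithin_iff]
    constructor
    · have : Continuous fun t => 2 * Real.sqrt (R t) :=
        continuous_const.mul (Real.continuous_sqrt.comp hcontR)
      have h := this.tendsto tbar
      rw [show 2 * Real.sqrt (R tbar) = 0 by rw [hRtbar, Real.sqrt_zero, mul_zero]] at h
      exact h.mono_left nhdsWithin_le_nhds
    · filter_upwards [self_mem_nhdsWithin] with t ht
      have := hRpos t ht
      have : 0 < Real.sqrt (R t) := Real.sqrt_pos.mpr this
      simp [Set.mem_Ioi]; linarith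
  have hdiv : Tendsto (fun t => (y₀ ^ 2 - 2 * α / k) * (-k) * Real.exp (-(k * (t - t₀))) *
      (2 * Real.sqrt (R t))⁻¹) (nhdsWithin tbar (Set.Iio tbar)) atBot :=
    Filter.Tendsto.neg_mul_atTop (by linarith : 2 * α < 0) hnum hden.inv_tendsto_nhdsGT_zero
  refine ⟨fun t _ ht => hRpos t ht, hRtbar, fun t _ ht => Real.sqrt_pos.mpr (hRpos t ht), hytbar, ?_⟩
  apply hdiv.congr'
  filter_upwards [self_mem_nhdsWithin] with t ht
  have hy := ((hRderiv t).sqrt (ne_of_gt (hRpos t ht))).deriv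
  rw [hy]; ring
end

section
/- (Lemma 2.) Let α ≥ 0, σ > 0, k > 0, t₀ ≥ 0, θ ≥ 0, and let φ : [t₀, t₀+θ] → ℝ be continuous. Let y¹ and y² be differentiable functions on [t₀, t₀+θ] such that for i = 1, 2 and all t ∈ [t₀, t₀+θ], yⁱ(t) + (σ/2)φ(t) > 0 and (yⁱ)′(t) = α/(yⁱ(t) + (σ/2)φ(t)) − (k/2)(yⁱ(t) + (σ/2)φ(t)). Then |y²(t) − y¹(t)| ≤ |y²(t₀) − y¹(t₀)| for all t ∈ [t₀, t₀+θ]. -/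
theorem stmt_5 (α σ k t₀ θ : ℝ) (hα : 0 ≤ α) (hσ : 0 < σ) (hk : 0 < k)
    (ht₀ : 0 ≤ t₀) (hθ : 0 ≤ θ)
    (φ : ℝ → ℝ) (hφ : ContinuousOn φ (Set.Icc t₀ (t₀ + θ)))
    (y₁ y₂ : ℝ → ℝ)
    (hpos₁ : ∀ t ∈ Set.Icc t₀ (t₀ + θ), 0 < y₁ t + σ / 2 * φ t)
    (hpos₂ : ∀ t ∈ Set.Icc t₀ (t₀ + θ), 0 < y₂ t + σ / 2 * φ t)
    (hder₁ : ∀ t ∈ Set.Icc t₀ (t₀ + θ), HasDerivWithinAt y₁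
      (α / (y₁ t + σ / 2 * φ t) - k / 2 * (y₁ t + σ / 2 * φ t)) (Set.Icc t₀ (t₀ + θ)) t)
    (hder₂ : ∀ t ∈ Set.Icc t₀ (t₀ + θ), HasDerivWithinAt y₂
      (α / (y₂ t + σ / 2 * φ t) - k / 2 * (y₂ t + σ / 2 * φ t)) (Set.Icc t₀ (t₀ + θ)) t) :
    ∀ t ∈ Set.Icc t₀ (t₀ + θ), |y₂ t - y₁ t| ≤ |y₂ t₀ - y₁ t₀| := by
  set s := Set.Icc t₀ (t₀ + θ) with hs
  have hcont₁ : ContinuousOn y₁ s := fun t ht => ((hder₁ t ht).continuousWithinAt)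
  have hcont₂ : ContinuousOn y₂ s := fun t ht => ((hder₂ t ht).continuousWithinAt)
  have hant : AntitoneOn (fun t => (y₂ t - y₁ t) ^ 2) s := by
    have hkey : ∀ x ∈ interior s, HasDerivAt (fun t => (y₂ t - y₁ t) ^ 2)
        ((2 : ℕ) * (y₂ x - y₁ x) ^ 1 *
          ((α / (y₂ x + σ / 2 * φ x) - k / 2 * (y₂ x + σ / 2 * φ x)) -
           (α / (y₁ x + σ / 2 * φ x) - k / 2 * (y₁ x + σ / 2 * φ x)))) x := by
      intro x hx
      rw [hs, interior_Icc] at hx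
      have hxs : x ∈ s := Set.mem_Icc_of_Ioo hx
      have hnh : s ∈ nhds x := by rw [hs]; exact Icc_mem_nhds hx.1 hx.2
      exact (((hder₂ x hxs).hasDerivAt hnh).sub ((hder₁ x hxs).hasDerivAt hnh)).pow 2
    apply antitoneOn_of_deriv_nonpos (convex_Icc _ _)
    · exact (hcont₂.sub hcont₁).pow 2
    · intro x hx
      exact ((hkey x hx).differentiableAt).differentiableWithinAt
    · intro x hx
      rw [(hkey x hx).deriv]
      rw [interior_Icc] at hx
      have hxs : x ∈ s := Set.mem_Icc_of_Ioo hx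
      have h1 := hpos₁ x hxs
      have h2 := hpos₂ x hxs
      set u₁ := y₁ x + σ / 2 * φ x
      set u₂ := y₂ x + σ / 2 * φ x
      have hz : y₂ x - y₁ x = u₂ - u₁ := by ring
      have hdd : α / u₂ - α / u₁ = -(α * (u₂ - u₁)) / (u₁ * u₂) := by
        field_simp
        ring
      rw [hz]
      have hterm : -(α * (u₂ - u₁)) / (u₁ * u₂) * (u₂ - u₁) ≤ 0 := by
        rw [div_mul_eq_mul_div]
        apply div_nonpos_of_nonpos_of_nonneg
        · nlinarith [sq_nonneg (u₂ - u₁)]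
        · positivity
      have : ((2:ℕ):ℝ) * (u₂ - u₁) ^ 1 *
          ((α / u₂ - k / 2 * u₂) - (α / u₁ - k / 2 * u₁)) =
          2 * ((-(α * (u₂ - u₁)) / (u₁ * u₂) * (u₂ - u₁)) - k / 2 * (u₂ - u₁)^2) := by
        rw [← hdd]; push_cast; ring
      rw [this]
      nlinarith [sq_nonneg (u₂ - u₁)]
  intro t ht
  have ht₀s : t₀ ∈ s := by constructor <;> [exact le_refl _; linarith]
  have := hant ht₀s ht ht.1
  simp only at this
  nlinarith [abs_nonneg (y₂ t - y₁ t), abs_nonneg (y₂ t₀ - y₁ t₀),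
    sq_abs (y₂ t - y₁ t), sq_abs (y₂ t₀ - y₁ t₀)]
end

section
/- Let α ≥ 0, σ > 0, k > 0, r > 0, t₀ ≥ 0, θ ≥ 0, and let φ : [t₀, t₀+θ] → ℝ be continuous with |φ(t)| ≤ r for all t ∈ [t₀, t₀+θ]. Let y be a differentiable function on [t₀, t₀+θ] with y(t₀) = y₀ ≥ σr, y(t) > (σ/2)r for all t ∈ [t₀, t₀+θ], and y′(t) = α/(y(t) + (σ/2)φ(t)) − (k/2)(y(t) + (σ/2)φ(t)) on [t₀, t₀+θ]. Then y⁻(t) ≤ y(t) ≤ y⁺(t) for all t ∈ [t₀, t₀+θ], where y⁻(t) = [(y₀ + (σ/2)r)² e^{−k(t−t₀)} + (2α/k)(1 − e^{−k(t−t₀)})]^{1/2} − (σ/2)r and y⁺(t) = [(y₀ − (σ/2)r)² e^{−k(t−t₀)} + (2α/k)(1 − e^{−k(t−t₀)})]^{1/2} + (σ/2)r. -/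
lemma comp_le (k A a b c : ℝ) (hk : 0 < k) (f f' : ℝ → ℝ)
    (hf : ∀ t ∈ Set.Icc a b, HasDerivWithinAt f (f' t) (Set.Icc a b) t)
    (hle : ∀ t ∈ Set.Icc a b, f' t ≤ A - k * f t)
    (hfa : f a = c) :
    ∀ t ∈ Set.Icc a b, f t ≤ c * Real.exp (-(k * (t - a))) +
      A / k * (1 - Real.exp (-(k * (t - a)))) := by
  intro t ht
  set F : ℝ → ℝ := fun s => (f s - A / k) * Real.exp (k * (s - a)) with hFdef
  have hcont : ContinuousOn f (Set.Icc a b) := fun s hs => (hf s hs).continuousWithinAt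
  have hFcont : ContinuousOn F (Set.Icc a b) :=
    (hcont.sub continuousOn_const).mul ((Real.continuous_exp.comp (by continuity)).continuousOn)
  have hderiv : ∀ x ∈ Set.Ioo a b,
      HasDerivAt F ((f' x + k * f x - A) * Real.exp (k * (x - a))) x := by
    intro x hx
    have hx' : x ∈ Set.Icc a b := Set.Ioo_subset_Icc_self hx
    have hmem : Set.Icc a b ∈ nhds x := Icc_mem_nhds hx.1 hx.2
    have hfx : HasDerivAt f (f' x) x := (hf x hx').hasDerivAt hmem
    have h1 : HasDerivAt (fun s => k * (s - a)) k x := by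
      simpa using ((hasDerivAt_id x).sub_const a).const_mul k
    have he : HasDerivAt (fun s => Real.exp (k * (s - a))) (Real.exp (k * (x - a)) * k) x := by
      exact (Real.hasDerivAt_exp (k * (x - a))).comp x h1
    have h2 := (hfx.sub_const (A / k)).mul he
    refine h2.congr_deriv ?_
    have hkne : k ≠ 0 := hk.ne'
    field_simp
    ring
  have hanti : AntitoneOn F (Set.Icc a b) := by
    apply antitoneOn_of_deriv_nonpos (convex_Icc a b) hFcont
    · intro x hx
      rw [interior_Icc] at hx
      exact (hderiv x hx).differentiableAt.differentiableWithinAt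
    · intro x hx
      rw [interior_Icc] at hx
      rw [(hderiv x hx).deriv]
      have hE := Real.exp_pos (k * (x - a))
      have := hle x (Set.Ioo_subset_Icc_self hx)
      nlinarith
  have ha : a ∈ Set.Icc a b := Set.left_mem_Icc.2 (le_trans ht.1 ht.2)
  have hFt : F t ≤ F a := hanti ha ht ht.1
  have hFa : F a = c - A / k := by simp [hFdef, hfa]
  rw [hFa] at hFt
  have hE1 : Real.exp (k * (t - a)) * Real.exp (-(k * (t - a))) = 1 := by
    rw [← Real.exp_add]; simp
  have h3 := mul_le_mul_of_nonneg_right hFt (Real.exp_pos (-(k * (t - a)))).le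
  simp only [hFdef] at h3
  have h4 : f t - A / k ≤ (c - A / k) * Real.exp (-(k * (t - a))) := by
    have h5 : f t - A / k = (f t - A / k) * Real.exp (k * (t - a)) * Real.exp (-(k * (t - a))) := by
      rw [mul_assoc, hE1, mul_one]
    linarith [h5 ▸ h3]
  nlinarith [h4]

theorem stmt_7 (α σ k r t₀ θ y₀ : ℝ) (hα : 0 ≤ α) (hσ : 0 < σ) (hk : 0 < k) (hr : 0 < r)
    (ht₀ : 0 ≤ t₀) (hθ : 0 ≤ θ)
    (φ : ℝ → ℝ) (hφ : ContinuousOn φ (Set.Icc t₀ (t₀ + θ)))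
    (hφr : ∀ t ∈ Set.Icc t₀ (t₀ + θ), |φ t| ≤ r)
    (y : ℝ → ℝ) (hinit : y t₀ = y₀) (hy₀ : σ * r ≤ y₀)
    (hpos : ∀ t ∈ Set.Icc t₀ (t₀ + θ), σ / 2 * r < y t)
    (hder : ∀ t ∈ Set.Icc t₀ (t₀ + θ), HasDerivWithinAt y
      (α / (y t + σ / 2 * φ t) - k / 2 * (y t + σ / 2 * φ t)) (Set.Icc t₀ (t₀ + θ)) t) :
    ∀ t ∈ Set.Icc t₀ (t₀ + θ),
      Real.sqrt ((y₀ + σ / 2 * r) ^ 2 * Real.exp (-(k * (t - t₀))) +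
          2 * α / k * (1 - Real.exp (-(k * (t - t₀))))) - σ / 2 * r ≤ y t ∧
      y t ≤ Real.sqrt ((y₀ - σ / 2 * r) ^ 2 * Real.exp (-(k * (t - t₀))) +
          2 * α / k * (1 - Real.exp (-(k * (t - t₀))))) + σ / 2 * r := by
  have ht₀mem : t₀ ∈ Set.Icc t₀ (t₀ + θ) := Set.left_mem_Icc.2 (by linarith)
  have hrange : ∀ s ∈ Set.Icc t₀ (t₀ + θ), 0 < y s - σ / 2 * r ∧
      y s - σ / 2 * r ≤ y s + σ / 2 * φ s ∧ y s + σ / 2 * φ s ≤ y s + σ / 2 * r := by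
    intro s hs
    have h1 := hpos s hs
    have h2 := abs_le.mp (hφr s hs)
    refine ⟨by linarith, ?_, ?_⟩
    · nlinarith [h2.1, hσ]
    · nlinarith [h2.2, hσ]
  -- Upper bound via h(s) = (y s - σ/2 r)^2
  have hUd : ∀ s ∈ Set.Icc t₀ (t₀ + θ),
      HasDerivWithinAt (fun u => (y u - σ / 2 * r) ^ 2)
        (2 * (y s - σ / 2 * r) * (α / (y s + σ / 2 * φ s) - k / 2 * (y s + σ / 2 * φ s)))
        (Set.Icc t₀ (t₀ + θ)) s := by
    intro s hs
    have h := ((hder s hs).sub_const (σ / 2 * r)).pow 2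
    refine h.congr_deriv ?_
    push_cast
    ring
  have hUle : ∀ s ∈ Set.Icc t₀ (t₀ + θ),
      2 * (y s - σ / 2 * r) * (α / (y s + σ / 2 * φ s) - k / 2 * (y s + σ / 2 * φ s)) ≤
        2 * α - k * (y s - σ / 2 * r) ^ 2 := by
    intro s hs
    obtain ⟨h1, h2, h3⟩ := hrange s hs
    have hD : 0 < y s + σ / 2 * φ s := lt_of_lt_of_le h1 h2
    have hdiv : (y s - σ / 2 * r) * (α / (y s + σ / 2 * φ s)) ≤ α := by
      have h4 : (y s - σ / 2 * r) * (α / (y s + σ / 2 * φ s)) ≤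
          (y s + σ / 2 * φ s) * (α / (y s + σ / 2 * φ s)) :=
        mul_le_mul_of_nonneg_right h2 (div_nonneg hα hD.le)
      have heq : (y s + σ / 2 * φ s) * (α / (y s + σ / 2 * φ s)) = α := by
        rw [mul_comm (y s + σ / 2 * φ s) (α / (y s + σ / 2 * φ s)), div_mul_cancel₀ α hD.ne']
      linarith
    have h5 : k * (y s - σ / 2 * r) * (y s - σ / 2 * r) ≤
        k * (y s - σ / 2 * r) * (y s + σ / 2 * φ s) :=
      mul_le_mul_of_nonneg_left h2 (mul_nonneg hk.le h1.le)
    nlinarith [hdiv, h5]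
  have hU := comp_le k (2 * α) t₀ (t₀ + θ) ((y₀ - σ / 2 * r) ^ 2) hk
    (fun u => (y u - σ / 2 * r) ^ 2)
    (fun s => 2 * (y s - σ / 2 * r) * (α / (y s + σ / 2 * φ s) - k / 2 * (y s + σ / 2 * φ s)))
    hUd hUle (by simp [hinit])
  -- Lower bound via g(s) = -(y s + σ/2 r)^2
  have hLd : ∀ s ∈ Set.Icc t₀ (t₀ + θ),
      HasDerivWithinAt (fun u => -((y u + σ / 2 * r) ^ 2))
        (-(2 * (y s + σ / 2 * r) * (α / (y s + σ / 2 * φ s) - k / 2 * (y s + σ / 2 * φ s))))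
        (Set.Icc t₀ (t₀ + θ)) s := by
    intro s hs
    have h := (((hder s hs).add_const (σ / 2 * r)).pow 2).neg
    refine h.congr_deriv ?_
    push_cast
    ring
  have hLle : ∀ s ∈ Set.Icc t₀ (t₀ + θ),
      -(2 * (y s + σ / 2 * r) * (α / (y s + σ / 2 * φ s) - k / 2 * (y s + σ / 2 * φ s))) ≤
        -(2 * α) - k * (-((y s + σ / 2 * r) ^ 2)) := by
    intro s hs
    obtain ⟨h1, h2, h3⟩ := hrange s hs
    have hD : 0 < y s + σ / 2 * φ s := lt_of_lt_of_le h1 h2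
    have hM : 0 < y s + σ / 2 * r := by nlinarith
    have hdiv : α ≤ (y s + σ / 2 * r) * (α / (y s + σ / 2 * φ s)) := by
      have h4 : (y s + σ / 2 * φ s) * (α / (y s + σ / 2 * φ s)) ≤
          (y s + σ / 2 * r) * (α / (y s + σ / 2 * φ s)) :=
        mul_le_mul_of_nonneg_right h3 (div_nonneg hα hD.le)
      have heq : (y s + σ / 2 * φ s) * (α / (y s + σ / 2 * φ s)) = α := by
        rw [mul_comm (y s + σ / 2 * φ s) (α / (y s + σ / 2 * φ s)), div_mul_cancel₀ α hD.ne']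
      linarith
    have h5 : k * (y s + σ / 2 * r) * (y s + σ / 2 * φ s) ≤
        k * (y s + σ / 2 * r) * (y s + σ / 2 * r) :=
      mul_le_mul_of_nonneg_left h3 (mul_nonneg hk.le hM.le)
    nlinarith [hdiv, h5]
  have hL := comp_le k (-(2 * α)) t₀ (t₀ + θ) (-((y₀ + σ / 2 * r) ^ 2)) hk
    (fun u => -((y u + σ / 2 * r) ^ 2))
    (fun s => -(2 * (y s + σ / 2 * r) * (α / (y s + σ / 2 * φ s) - k / 2 * (y s + σ / 2 * φ s))))
    hLd hLle (by simp [hinit])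
  intro t ht
  obtain ⟨h1, h2, h3⟩ := hrange t ht
  have hM : 0 < y t + σ / 2 * r := by nlinarith
  have hUt := hU t ht
  have hLt := hL t ht
  set E := Real.exp (-(k * (t - t₀))) with hE
  constructor
  · -- lower bound
    have hWle : (y₀ + σ / 2 * r) ^ 2 * E + 2 * α / k * (1 - E) ≤ (y t + σ / 2 * r) ^ 2 := by
      have : -(2 * α) / k = -(2 * α / k) := by ring
      rw [this] at hLt
      linarith
    have hs1 : Real.sqrt ((y₀ + σ / 2 * r) ^ 2 * E + 2 * α / k * (1 - E)) ≤
        Real.sqrt ((y t + σ / 2 * r) ^ 2) := Real.sqrt_le_sqrt hWle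
    rw [Real.sqrt_sq hM.le] at hs1
    linarith
  · -- upper bound
    have hs1 : y t - σ / 2 * r ≤
        Real.sqrt ((y₀ - σ / 2 * r) ^ 2 * E + 2 * α / k * (1 - E)) := by
      have := Real.sqrt_le_sqrt hUt
      rwa [Real.sqrt_sq h1.le] at this
    linarith
end

section
/- (Proposition 3.) Let α ≥ 0, σ > 0, k > 0, T > 0, 0 ≤ θ ≤ T, t₀ ≥ 0, and let η and r satisfy 0 < σr ≤ η. Let φ : [t₀, t₀+θ] → ℝ be continuous with |φ(t)| ≤ r for all t ∈ [t₀, t₀+θ]. Let y be a differentiable function on [t₀, t₀+θ] with y(t₀) = y₀ ≥ η, y(t) > (σ/2)r for all t ∈ [t₀, t₀+θ], and y′(t) = α/(y(t) + (σ/2)φ(t)) − (k/2)(y(t) + (σ/2)φ(t)) on [t₀, t₀+θ]. Let y⁰(t) = [y₀² e^{−k(t−t₀)} + (2α/k)(1 − e^{−k(t−t₀)})]^{1/2}. Then |y(t) − y⁰(t)| ≤ C·r·(t − t₀) ≤ C·r·θ for all t ∈ [t₀, t₀+θ], where C = σk/2 + (4ασ/(3η²))·e^{kT/2}; in particular C is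 independent of t₀, y₀ and r. -/
/-- The explicit solution `y⁰(t) = [y₀² e^{−k(t−t₀)} + (2α/k)(1 − e^{−k(t−t₀)})]^{1/2}`
of the ODE `dy/dt = α/y − (k/2)y`, `y(t₀) = y₀`. -/
noncomputable def cirY0 (k α t₀ y₀ t : ℝ) : ℝ :=
  Real.sqrt (y₀ ^ 2 * Real.exp (-(k * (t - t₀))) +
    2 * α / k * (1 - Real.exp (-(k * (t - t₀)))))

set_option maxHeartbeats 1600000 in
theorem stmt_8 (α σ k T θ t₀ η r y₀ : ℝ) (hα : 0 ≤ α) (hσ : 0 < σ) (hk : 0 < k)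
    (hT : 0 < T) (hθ0 : 0 ≤ θ) (hθT : θ ≤ T) (ht₀ : 0 ≤ t₀)
    (hr : 0 < σ * r) (hηr : σ * r ≤ η)
    (φ : ℝ → ℝ) (hφ : ContinuousOn φ (Set.Icc t₀ (t₀ + θ)))
    (hφr : ∀ t ∈ Set.Icc t₀ (t₀ + θ), |φ t| ≤ r)
    (y : ℝ → ℝ) (hinit : y t₀ = y₀) (hy₀ : η ≤ y₀)
    (hpos : ∀ t ∈ Set.Icc t₀ (t₀ + θ), σ / 2 * r < y t)
    (hder : ∀ t ∈ Set.Icc t₀ (t₀ + θ), HasDerivWithinAt y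
      (α / (y t + σ / 2 * φ t) - k / 2 * (y t + σ / 2 * φ t)) (Set.Icc t₀ (t₀ + θ)) t) :
    let C : ℝ := σ * k / 2 + 4 * α * σ / (3 * η ^ 2) * Real.exp (k * T / 2)
    ∀ t ∈ Set.Icc t₀ (t₀ + θ),
      |y t - cirY0 k α t₀ y₀ t| ≤ C * r * (t - t₀) ∧ C * r * (t - t₀) ≤ C * r * θ := by
  intro C
  have hCdef : C = σ * k / 2 + 4 * α * σ / (3 * η ^ 2) * Real.exp (k * T / 2) := rfl
  clear_value C
  intro t ht
  obtain ⟨ht1, ht2⟩ := ht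
  have hη : 0 < η := lt_of_lt_of_le hr hηr
  have hr' : 0 < r := by
    rcases mul_pos_iff.mp hr with ⟨_, h⟩ | ⟨h, _⟩
    · exact h
    · linarith
  have hy₀pos : 0 < y₀ := lt_of_lt_of_le hη hy₀
  have ht₀I : t₀ ∈ Set.Icc t₀ (t₀ + θ) := ⟨le_refl _, by linarith⟩
  have htI : t ∈ Set.Icc t₀ (t₀ + θ) := ⟨ht1, ht2⟩
  have hτ0 : 0 ≤ t - t₀ := by linarith
  have hτθ : t - t₀ ≤ θ := by linarith
  -- pointwise facts about v = y s + σ/2 φ s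
  have hvfacts : ∀ x ∈ Set.Icc t₀ (t₀ + θ),
      y x - σ * r / 2 ≤ y x + σ / 2 * φ x ∧ y x + σ / 2 * φ x ≤ y x + σ * r / 2 ∧
      0 < y x + σ / 2 * φ x ∧ 0 < y x - σ * r / 2 := by
    intro x hx
    obtain ⟨h3, h4⟩ := abs_le.mp (hφr x hx)
    have h2 := hpos x hx
    have h5 : σ / 2 * (-r) ≤ σ / 2 * φ x := mul_le_mul_of_nonneg_left h3 (by linarith)
    have h6 : σ / 2 * φ x ≤ σ / 2 * r := mul_le_mul_of_nonneg_left h4 (by linarith)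
    have e1 : σ / 2 * (-r) = -(σ * r / 2) := by ring
    have e2 : σ / 2 * r = σ * r / 2 := by ring
    refine ⟨by linarith, by linarith, by linarith, by linarith⟩
  have hycont : ContinuousOn y (Set.Icc t₀ (t₀ + θ)) :=
    fun x hx => (hder x hx).continuousWithinAt
  obtain ⟨m2, hm2⟩ : ∃ x : ℝ, x = 2 * α / k := ⟨_, rfl⟩
  have hm20 : 0 ≤ m2 := by
    rw [hm2]; exact div_nonneg (by linarith) hk.le
  have hkm2 : k * m2 = 2 * α := by rw [hm2]; field_simp
  have hexpcont : Continuous (fun s : ℝ => Real.exp (k * (s - t₀))) :=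
    Real.continuous_exp.comp (continuous_const.mul (continuous_id.sub continuous_const))
  -- the two monotone quantities
  have hanti : AntitoneOn
      (fun s => Real.exp (k * (s - t₀)) * ((y s - σ * r / 2) ^ 2 - m2)) (Set.Icc t₀ (t₀ + θ)) := by
    apply antitoneOn_of_hasDerivWithinAt_nonpos (convex_Icc _ _)
      (f' := fun x => Real.exp (k * (x - t₀)) * (k * ((y x - σ * r / 2) ^ 2 - m2) +
        2 * (y x - σ * r / 2) * (α / (y x + σ / 2 * φ x) - k / 2 * (y x + σ / 2 * φ x))))
    · exact hexpcont.continuousOn.mul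
        (((hycont.sub continuousOn_const).pow 2).sub continuousOn_const)
    · intro x hx
      rw [interior_Icc] at hx
      have hxI : x ∈ Set.Icc t₀ (t₀ + θ) := Set.Ioo_subset_Icc_self hx
      have hyd : HasDerivAt y
          (α / (y x + σ / 2 * φ x) - k / 2 * (y x + σ / 2 * φ x)) x :=
        (hder x hxI).hasDerivAt (Icc_mem_nhds hx.1 hx.2)
      have h1 : HasDerivAt (fun s : ℝ => k * (s - t₀)) k x := by
        simpa using ((hasDerivAt_id x).sub_const t₀).const_mul k
      have h2 : HasDerivAt (fun s => Real.exp (k * (s - t₀)))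
          (Real.exp (k * (x - t₀)) * k) x := h1.exp
      have h3 := ((hyd.sub_const (σ * r / 2)).pow 2).sub_const m2
      have h4 := h2.mul h3
      apply HasDerivAt.hasDerivWithinAt
      refine h4.congr_deriv ?_
      push_cast
      simp only [Pi.pow_apply]
      ring
    · intro x hx
      rw [interior_Icc] at hx
      have hxI : x ∈ Set.Icc t₀ (t₀ + θ) := Set.Ioo_subset_Icc_self hx
      obtain ⟨hle1, hle2, hv, hw⟩ := hvfacts x hxI
      obtain ⟨v, hvdef⟩ : ∃ z : ℝ, z = y x + σ / 2 * φ x := ⟨_, rfl⟩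
      obtain ⟨w, hwdef⟩ : ∃ z : ℝ, z = y x - σ * r / 2 := ⟨_, rfl⟩
      show Real.exp (k * (x - t₀)) * (k * ((y x - σ * r / 2) ^ 2 - m2) +
        2 * (y x - σ * r / 2) * (α / (y x + σ / 2 * φ x) - k / 2 * (y x + σ / 2 * φ x))) ≤ 0
      rw [← hvdef, ← hwdef] at hle1 ⊢
      rw [← hvdef] at hv
      rw [← hwdef] at hw
      have hdv : (α / v - k / 2 * v) * v = α - k / 2 * v ^ 2 := by
        field_simp
      have hkey : (k * (w ^ 2 - m2) + 2 * w * (α / v - k / 2 * v)) * v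
          = -((v - w) * (2 * α + k * w * v)) := by
        linear_combination 2 * w * hdv - v * hkm2
      have h10 : 0 ≤ (v - w) * (2 * α + k * w * v) := by
        have h11 : 0 < k * w * v := mul_pos (mul_pos hk hw) hv
        exact mul_nonneg (by linarith) (by linarith)
      have h9 : (k * (w ^ 2 - m2) + 2 * w * (α / v - k / 2 * v)) * v ≤ 0 * v := by
        rw [hkey, zero_mul]; linarith
      have hB := le_of_mul_le_mul_right h9 hv
      exact mul_nonpos_iff.mpr (Or.inl ⟨(Real.exp_pos _).le, hB⟩)
  have hmono : MonotoneOn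
      (fun s => Real.exp (k * (s - t₀)) * ((y s + σ * r / 2) ^ 2 - m2)) (Set.Icc t₀ (t₀ + θ)) := by
    apply monotoneOn_of_hasDerivWithinAt_nonneg (convex_Icc _ _)
      (f' := fun x => Real.exp (k * (x - t₀)) * (k * ((y x + σ * r / 2) ^ 2 - m2) +
        2 * (y x + σ * r / 2) * (α / (y x + σ / 2 * φ x) - k / 2 * (y x + σ / 2 * φ x))))
    · exact hexpcont.continuousOn.mul
        (((hycont.add continuousOn_const).pow 2).sub continuousOn_const)
    · intro x hx
      rw [interior_Icc] at hx
      have hxI : x ∈ Set.Icc t₀ (t₀ + θ) := Set.Ioo_subset_Icc_self hx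
      have hyd : HasDerivAt y
          (α / (y x + σ / 2 * φ x) - k / 2 * (y x + σ / 2 * φ x)) x :=
        (hder x hxI).hasDerivAt (Icc_mem_nhds hx.1 hx.2)
      have h1 : HasDerivAt (fun s : ℝ => k * (s - t₀)) k x := by
        simpa using ((hasDerivAt_id x).sub_const t₀).const_mul k
      have h2 : HasDerivAt (fun s => Real.exp (k * (s - t₀)))
          (Real.exp (k * (x - t₀)) * k) x := h1.exp
      have h3 := ((hyd.add_const (σ * r / 2)).pow 2).sub_const m2
      have h4 := h2.mul h3
      apply HasDerivAt.hasDerivWithinAt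
      refine h4.congr_deriv ?_
      push_cast
      simp only [Pi.pow_apply]
      ring
    · intro x hx
      rw [interior_Icc] at hx
      have hxI : x ∈ Set.Icc t₀ (t₀ + θ) := Set.Ioo_subset_Icc_self hx
      obtain ⟨hle1, hle2, hv, hw⟩ := hvfacts x hxI
      obtain ⟨v, hvdef⟩ : ∃ z : ℝ, z = y x + σ / 2 * φ x := ⟨_, rfl⟩
      obtain ⟨g, hgdef⟩ : ∃ z : ℝ, z = y x + σ * r / 2 := ⟨_, rfl⟩
      show 0 ≤ Real.exp (k * (x - t₀)) * (k * ((y x + σ * r / 2) ^ 2 - m2) +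
        2 * (y x + σ * r / 2) * (α / (y x + σ / 2 * φ x) - k / 2 * (y x + σ / 2 * φ x)))
      rw [← hvdef, ← hgdef] at hle2 ⊢
      rw [← hvdef] at hv
      have hg : 0 < g := by
        rw [hgdef]
        have h2 := hpos x hxI
        linarith
      have hdv : (α / v - k / 2 * v) * v = α - k / 2 * v ^ 2 := by
        field_simp
      have hkey : (k * (g ^ 2 - m2) + 2 * g * (α / v - k / 2 * v)) * v
          = (g - v) * (2 * α + k * g * v) := by
        linear_combination 2 * g * hdv - v * hkm2
      have h10 : 0 ≤ (g - v) * (2 * α + k * g * v) := by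
        have h11 : 0 < k * g * v := mul_pos (mul_pos hk hg) hv
        exact mul_nonneg (by linarith) (by linarith)
      have h9 : 0 * v ≤ (k * (g ^ 2 - m2) + 2 * g * (α / v - k / 2 * v)) * v := by
        rw [hkey, zero_mul]; linarith
      have hB := le_of_mul_le_mul_right h9 hv
      exact mul_nonneg (Real.exp_pos _).le hB
  -- exponential quantities
  obtain ⟨l, hl⟩ : ∃ z : ℝ, z = Real.exp (-(k * (t - t₀))) := ⟨_, rfl⟩
  obtain ⟨p, hp⟩ : ∃ z : ℝ, z = Real.exp (-(k * (t - t₀)) / 2) := ⟨_, rfl⟩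
  obtain ⟨ET, hET⟩ : ∃ z : ℝ, z = Real.exp (k * T / 2) := ⟨_, rfl⟩
  rw [← hET] at hCdef
  have hl0 : 0 < l := by rw [hl]; exact Real.exp_pos _
  have hp0 : 0 < p := by rw [hp]; exact Real.exp_pos _
  have hl1 : l ≤ 1 := by
    rw [hl]
    calc Real.exp (-(k * (t - t₀))) ≤ Real.exp 0 :=
      Real.exp_le_exp.mpr (by linarith [mul_nonneg hk.le hτ0])
    _ = 1 := Real.exp_zero
  have hlp : l ≤ p := by
    rw [hl, hp]
    exact Real.exp_le_exp.mpr (by linarith [mul_nonneg hk.le hτ0])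
  have hp2 : p ^ 2 = l := by
    rw [hp, hl, sq, ← Real.exp_add]
    congr 1
    ring
  have h1ml : 1 - l ≤ k * (t - t₀) := by
    have := Real.add_one_le_exp (-(k * (t - t₀)))
    rw [← hl] at this
    linarith
  have hET1 : 1 ≤ ET := by
    have := Real.add_one_le_exp (k * T / 2)
    rw [← hET] at this
    linarith [mul_pos hk hT]
  -- from monotonicity to the sandwich
  have hFle : Real.exp (k * (t - t₀)) * ((y t - σ * r / 2) ^ 2 - m2) ≤
      Real.exp (k * (t₀ - t₀)) * ((y t₀ - σ * r / 2) ^ 2 - m2) := hanti ht₀I htI ht1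
  have hGle : Real.exp (k * (t₀ - t₀)) * ((y t₀ + σ * r / 2) ^ 2 - m2) ≤
      Real.exp (k * (t - t₀)) * ((y t + σ * r / 2) ^ 2 - m2) := hmono ht₀I htI ht1
  have hzero : Real.exp (k * (t₀ - t₀)) = 1 := by rw [sub_self, mul_zero, Real.exp_zero]
  rw [hzero, one_mul, hinit] at hFle hGle
  have hlE : l * Real.exp (k * (t - t₀)) = 1 := by
    rw [hl, ← Real.exp_add]
    norm_num
  have hA1 : (y t - σ * r / 2) ^ 2 ≤ (y₀ - σ * r / 2) ^ 2 * l + m2 * (1 - l) := by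
    have h7 := mul_le_mul_of_nonneg_left hFle hl0.le
    have h8 : (y t - σ * r / 2) ^ 2 - m2 =
        l * (Real.exp (k * (t - t₀)) * ((y t - σ * r / 2) ^ 2 - m2)) := by
      rw [← mul_assoc, hlE, one_mul]
    linarith [h7, h8]
  have hA2 : (y₀ + σ * r / 2) ^ 2 * l + m2 * (1 - l) ≤ (y t + σ * r / 2) ^ 2 := by
    have h7 := mul_le_mul_of_nonneg_left hGle hl0.le
    have h8 : (y t + σ * r / 2) ^ 2 - m2 =
        l * (Real.exp (k * (t - t₀)) * ((y t + σ * r / 2) ^ 2 - m2)) := by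
      rw [← mul_assoc, hlE, one_mul]
    linarith [h7, h8]
  -- the three sqrt quantities
  have h1ml0 : (0:ℝ) ≤ 1 - l := by linarith
  have hX00 : 0 ≤ y₀ ^ 2 * l + m2 * (1 - l) := by
    linarith [mul_nonneg (sq_nonneg y₀) hl0.le, mul_nonneg hm20 h1ml0]
  have hXP0 : 0 ≤ (y₀ - σ * r / 2) ^ 2 * l + m2 * (1 - l) := by
    linarith [mul_nonneg (sq_nonneg (y₀ - σ * r / 2)) hl0.le, mul_nonneg hm20 h1ml0]
  have hXM0 : 0 ≤ (y₀ + σ * r / 2) ^ 2 * l + m2 * (1 - l) := by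
    linarith [mul_nonneg (sq_nonneg (y₀ + σ * r / 2)) hl0.le, mul_nonneg hm20 h1ml0]
  obtain ⟨Y0, hY0⟩ : ∃ z : ℝ, z = Real.sqrt (y₀ ^ 2 * l + m2 * (1 - l)) := ⟨_, rfl⟩
  obtain ⟨Zp, hZp⟩ : ∃ z : ℝ, z = Real.sqrt ((y₀ - σ * r / 2) ^ 2 * l + m2 * (1 - l)) := ⟨_, rfl⟩
  obtain ⟨Zm, hZm⟩ : ∃ z : ℝ, z = Real.sqrt ((y₀ + σ * r / 2) ^ 2 * l + m2 * (1 - l)) := ⟨_, rfl⟩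
  have hcir : cirY0 k α t₀ y₀ t = Y0 := by
    rw [hY0, cirY0, hl, hm2]
  have hY0sq : Y0 ^ 2 = y₀ ^ 2 * l + m2 * (1 - l) := by rw [hY0]; exact Real.sq_sqrt hX00
  have hZpsq : Zp ^ 2 = (y₀ - σ * r / 2) ^ 2 * l + m2 * (1 - l) := by
    rw [hZp]; exact Real.sq_sqrt hXP0
  have hZmsq : Zm ^ 2 = (y₀ + σ * r / 2) ^ 2 * l + m2 * (1 - l) := by
    rw [hZm]; exact Real.sq_sqrt hXM0
  have hcp0 : 0 < y₀ - σ * r / 2 := by linarith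
  have hcm0 : 0 < y₀ + σ * r / 2 := by linarith
  -- key sandwich inequalities for y t
  have hyt0 : 0 ≤ y t - σ * r / 2 := by
    have h2 := hpos t htI
    linarith
  have key1 : y t - σ * r / 2 ≤ Zp := by
    rw [hZp]
    calc y t - σ * r / 2 = Real.sqrt ((y t - σ * r / 2) ^ 2) := (Real.sqrt_sq hyt0).symm
    _ ≤ _ := Real.sqrt_le_sqrt hA1
  have key2 : Zm ≤ y t + σ * r / 2 := by
    rw [hZm]
    calc Real.sqrt ((y₀ + σ * r / 2) ^ 2 * l + m2 * (1 - l))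
        ≤ Real.sqrt ((y t + σ * r / 2) ^ 2) := Real.sqrt_le_sqrt hA2
    _ = y t + σ * r / 2 := Real.sqrt_sq (by linarith)
  -- lower bounds
  have hY0_lb : y₀ * p ≤ Y0 := by
    rw [hY0]
    have h0 : 0 ≤ y₀ * p := mul_nonneg hy₀pos.le hp0.le
    have h1 : (y₀ * p) ^ 2 ≤ y₀ ^ 2 * l + m2 * (1 - l) := by
      have h2 : (y₀ * p) ^ 2 = y₀ ^ 2 * l := by rw [mul_pow, hp2]
      linarith [mul_nonneg hm20 h1ml0]
    calc y₀ * p = Real.sqrt ((y₀ * p) ^ 2) := (Real.sqrt_sq h0).symm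
    _ ≤ _ := Real.sqrt_le_sqrt h1
  have hZp_lb : (y₀ - σ * r / 2) * p ≤ Zp := by
    rw [hZp]
    have h0 : 0 ≤ (y₀ - σ * r / 2) * p := mul_nonneg hcp0.le hp0.le
    have h1 : ((y₀ - σ * r / 2) * p) ^ 2 ≤ (y₀ - σ * r / 2) ^ 2 * l + m2 * (1 - l) := by
      have h2 : ((y₀ - σ * r / 2) * p) ^ 2 = (y₀ - σ * r / 2) ^ 2 * l := by rw [mul_pow, hp2]
      linarith [mul_nonneg hm20 h1ml0]
    calc (y₀ - σ * r / 2) * p = Real.sqrt (((y₀ - σ * r / 2) * p) ^ 2) := (Real.sqrt_sq h0).symm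
    _ ≤ _ := Real.sqrt_le_sqrt h1
  have hZm_lb : (y₀ + σ * r / 2) * p ≤ Zm := by
    rw [hZm]
    have h0 : 0 ≤ (y₀ + σ * r / 2) * p := mul_nonneg hcm0.le hp0.le
    have h1 : ((y₀ + σ * r / 2) * p) ^ 2 ≤ (y₀ + σ * r / 2) ^ 2 * l + m2 * (1 - l) := by
      have h2 : ((y₀ + σ * r / 2) * p) ^ 2 = (y₀ + σ * r / 2) ^ 2 * l := by rw [mul_pow, hp2]
      linarith [mul_nonneg hm20 h1ml0]
    calc (y₀ + σ * r / 2) * p = Real.sqrt (((y₀ + σ * r / 2) * p) ^ 2) := (Real.sqrt_sq h0).symm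
    _ ≤ _ := Real.sqrt_le_sqrt h1
  -- upper bounds, with q = (1-l) m2 / η
  obtain ⟨q, hq⟩ : ∃ z : ℝ, z = (1 - l) * m2 / η := ⟨_, rfl⟩
  have hq0 : 0 ≤ q := by
    rw [hq]; exact div_nonneg (mul_nonneg h1ml0 hm20) hη.le
  have hqη : q * η = (1 - l) * m2 := by rw [hq]; exact div_mul_cancel₀ _ hη.ne'
  have hηy₀q : η * q ≤ y₀ * q := mul_le_mul_of_nonneg_right hy₀ hq0
  have hY0_ub : Y0 ≤ y₀ + q / 2 := by
    rw [hY0]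
    have hb0 : 0 ≤ y₀ + q / 2 := by linarith
    have h1 : y₀ ^ 2 * l + m2 * (1 - l) ≤ (y₀ + q / 2) ^ 2 := by
      have key : (1 - l) * m2 ≤ y₀ * q := by rw [← hqη]; linarith [hηy₀q]
      have expand : (y₀ + q / 2) ^ 2 = y₀ ^ 2 + y₀ * q + q ^ 2 / 4 := by ring
      linarith [key, expand, sq_nonneg q, mul_nonneg h1ml0 (sq_nonneg y₀)]
    calc Real.sqrt (y₀ ^ 2 * l + m2 * (1 - l)) ≤ Real.sqrt ((y₀ + q / 2) ^ 2) :=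
      Real.sqrt_le_sqrt h1
    _ = y₀ + q / 2 := Real.sqrt_sq hb0
  have hZp_ub : Zp ≤ (y₀ - σ * r / 2) + q := by
    rw [hZp]
    have hb0 : 0 ≤ (y₀ - σ * r / 2) + q := by linarith
    have h2cp : η ≤ 2 * (y₀ - σ * r / 2) := by linarith
    have hcpq : η * q ≤ 2 * (y₀ - σ * r / 2) * q := mul_le_mul_of_nonneg_right h2cp hq0
    have h1 : (y₀ - σ * r / 2) ^ 2 * l + m2 * (1 - l) ≤ ((y₀ - σ * r / 2) + q) ^ 2 := by
      have key : (1 - l) * m2 ≤ 2 * (y₀ - σ * r / 2) * q := by rw [← hqη]; linarith [hcpq]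
      have expand : ((y₀ - σ * r / 2) + q) ^ 2
          = (y₀ - σ * r / 2) ^ 2 + 2 * (y₀ - σ * r / 2) * q + q ^ 2 := by ring
      linarith [key, expand, sq_nonneg q, mul_nonneg h1ml0 (sq_nonneg (y₀ - σ * r / 2))]
    calc Real.sqrt ((y₀ - σ * r / 2) ^ 2 * l + m2 * (1 - l))
        ≤ Real.sqrt (((y₀ - σ * r / 2) + q) ^ 2) := Real.sqrt_le_sqrt h1
    _ = (y₀ - σ * r / 2) + q := Real.sqrt_sq hb0
  have hZm_ub : Zm ≤ (y₀ + σ * r / 2) + q / 2 := by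
    rw [hZm]
    have hb0 : 0 ≤ (y₀ + σ * r / 2) + q / 2 := by linarith
    have h2cm : η ≤ y₀ + σ * r / 2 := by linarith
    have hcmq : η * q ≤ (y₀ + σ * r / 2) * q := mul_le_mul_of_nonneg_right h2cm hq0
    have h1 : (y₀ + σ * r / 2) ^ 2 * l + m2 * (1 - l) ≤ ((y₀ + σ * r / 2) + q / 2) ^ 2 := by
      have key : (1 - l) * m2 ≤ (y₀ + σ * r / 2) * q := by rw [← hqη]; linarith [hcmq]
      have expand : ((y₀ + σ * r / 2) + q / 2) ^ 2
          = (y₀ + σ * r / 2) ^ 2 + (y₀ + σ * r / 2) * q + q ^ 2 / 4 := by ring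
      linarith [key, expand, sq_nonneg q, mul_nonneg h1ml0 (sq_nonneg (y₀ + σ * r / 2))]
    calc Real.sqrt ((y₀ + σ * r / 2) ^ 2 * l + m2 * (1 - l))
        ≤ Real.sqrt (((y₀ + σ * r / 2) + q / 2) ^ 2) := Real.sqrt_le_sqrt h1
    _ = (y₀ + σ * r / 2) + q / 2 := Real.sqrt_sq hb0
  -- the q bound
  have hq_ub : q ≤ 2 * α * (t - t₀) / η := by
    have h3 : (1 - l) * m2 ≤ (k * (t - t₀)) * m2 := mul_le_mul_of_nonneg_right h1ml hm20
    have h4 : (k * (t - t₀)) * m2 = 2 * α * (t - t₀) := by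
      rw [hm2]; field_simp
    rw [hq]
    exact (div_le_div_iff_of_pos_right hη).mpr (by linarith)
  -- common positive atoms
  have hσr2 : (0:ℝ) ≤ σ * r / 2 := by linarith
  have hAσ : 0 ≤ 4 * α * σ / (3 * η ^ 2) :=
    div_nonneg (mul_nonneg (mul_nonneg (by norm_num) hα) hσ.le) (by positivity)
  have hcoef : 0 ≤ 4 * α * σ / (3 * η ^ 2) * r * (t - t₀) :=
    mul_nonneg (mul_nonneg hAσ hr'.le) hτ0
  -- SIDE 1: y t - Y0 ≤ C r (t - t₀)
  have side1 : σ * r / 2 + Zp - Y0 ≤ C * r * (t - t₀) := by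
    have hD_lb : 3 * η / 2 * p ≤ Zp + Y0 := by
      have h1 : 3 * η / 2 ≤ (y₀ - σ * r / 2) + y₀ := by linarith
      have h2 : 3 * η / 2 * p ≤ ((y₀ - σ * r / 2) + y₀) * p := mul_le_mul_of_nonneg_right h1 hp0.le
      have h3 : ((y₀ - σ * r / 2) + y₀) * p = (y₀ - σ * r / 2) * p + y₀ * p := by ring
      linarith [hZp_lb, hY0_lb]
    have hD_pos : 0 < Zp + Y0 :=
      lt_of_lt_of_le (mul_pos (by linarith : (0:ℝ) < 3 * η / 2) hp0) hD_lb
    have hdiffsq : Zp ^ 2 - Y0 ^ 2 = l * ((y₀ - σ * r / 2) ^ 2 - y₀ ^ 2) := by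
      rw [hZpsq, hY0sq]; ring
    have e_id : (σ * r / 2 + Zp - Y0) * (Zp + Y0)
        = σ * r / 2 * (1 - l) * (Zp + Y0) + σ * r / 2 * l * ((Zp + Y0) - (2 * y₀ - σ * r / 2)) := by
      linear_combination hdiffsq
    have w1 : σ * r / 2 * (1 - l) * (Zp + Y0) ≤ σ * k / 2 * r * (t - t₀) * (Zp + Y0) := by
      have h1 : σ * r / 2 * (1 - l) ≤ σ * r / 2 * (k * (t - t₀)) :=
        mul_le_mul_of_nonneg_left h1ml hσr2
      have h2 := mul_le_mul_of_nonneg_right h1 hD_pos.le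
      have h3 : σ * r / 2 * (k * (t - t₀)) * (Zp + Y0) = σ * k / 2 * r * (t - t₀) * (Zp + Y0) := by
        ring
      linarith
    have w2 : (Zp + Y0) - (2 * y₀ - σ * r / 2) ≤ 3 / 2 * q := by
      linarith [hZp_ub, hY0_ub]
    have w3 : σ * r / 2 * l * ((Zp + Y0) - (2 * y₀ - σ * r / 2)) ≤ σ * r / 2 * l * (3 / 2 * q) :=
      mul_le_mul_of_nonneg_left w2 (mul_nonneg hσr2 hl0.le)
    have w4 : σ * r / 2 * l * (3 / 2 * q) ≤ 2 * (α * σ * r * (t - t₀) * p / η) := by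
      have h1 : l * q ≤ p * q := mul_le_mul_of_nonneg_right hlp hq0
      have h5 : σ * r / 2 * l * (3 / 2 * q) = 3 / 4 * (σ * r) * (l * q) := by ring
      have h6 : 3 / 4 * (σ * r) * (l * q) ≤ 3 / 4 * (σ * r) * (p * q) :=
        mul_le_mul_of_nonneg_left h1 (by linarith : (0:ℝ) ≤ 3 / 4 * (σ * r))
      have h7 : p * q ≤ p * (2 * α * (t - t₀) / η) := mul_le_mul_of_nonneg_left hq_ub hp0.le
      have h8 : 3 / 4 * (σ * r) * (p * q) ≤ 3 / 4 * (σ * r) * (p * (2 * α * (t - t₀) / η)) :=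
        mul_le_mul_of_nonneg_left h7 (by linarith : (0:ℝ) ≤ 3 / 4 * (σ * r))
      have h9 : 3 / 4 * (σ * r) * (p * (2 * α * (t - t₀) / η))
          = 3 / 2 * (α * σ * r * (t - t₀) * p / η) := by ring
      have h10 : 0 ≤ α * σ * r * (t - t₀) * p / η :=
        div_nonneg (mul_nonneg (mul_nonneg (mul_nonneg (mul_nonneg hα hσ.le) hr'.le) hτ0)
          hp0.le) hη.le
      linarith
    have w5 : 2 * (α * σ * r * (t - t₀) * p / η)
        ≤ 4 * α * σ / (3 * η ^ 2) * ET * r * (t - t₀) * (Zp + Y0) := by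
      have h1 : 4 * α * σ / (3 * η ^ 2) * r * (t - t₀) * (3 * η / 2 * p)
          = 2 * (α * σ * r * (t - t₀) * p / η) := by
        field_simp
        ring
      have h2 : 4 * α * σ / (3 * η ^ 2) * r * (t - t₀) * (3 * η / 2 * p)
          ≤ 4 * α * σ / (3 * η ^ 2) * r * (t - t₀) * (Zp + Y0) :=
        mul_le_mul_of_nonneg_left hD_lb hcoef
      have h4 : 4 * α * σ / (3 * η ^ 2) * ET * r * (t - t₀) * (Zp + Y0)
          - 4 * α * σ / (3 * η ^ 2) * r * (t - t₀) * (Zp + Y0)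
          = (4 * α * σ / (3 * η ^ 2) * r * (t - t₀) * (Zp + Y0)) * (ET - 1) := by ring
      have h5 : 0 ≤ (4 * α * σ / (3 * η ^ 2) * r * (t - t₀) * (Zp + Y0)) * (ET - 1) :=
        mul_nonneg (mul_nonneg hcoef hD_pos.le) (by linarith)
      linarith
    have main : (σ * r / 2 + Zp - Y0) * (Zp + Y0) ≤ (C * r * (t - t₀)) * (Zp + Y0) := by
      have hrhs : (C * r * (t - t₀)) * (Zp + Y0)
          = σ * k / 2 * r * (t - t₀) * (Zp + Y0)
            + 4 * α * σ / (3 * η ^ 2) * ET * r * (t - t₀) * (Zp + Y0) := by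
        rw [hCdef]; ring
      linarith [e_id, w1, w3, w4, w5]
    exact le_of_mul_le_mul_right main hD_pos
  -- SIDE 2: Y0 - y t ≤ C r (t - t₀)
  have side2 : σ * r / 2 + Y0 - Zm ≤ C * r * (t - t₀) := by
    have hD_lb : 3 * η / 2 * p ≤ Zm + Y0 := by
      have h1 : 3 * η / 2 ≤ (y₀ + σ * r / 2) + y₀ := by linarith
      have h2 : 3 * η / 2 * p ≤ ((y₀ + σ * r / 2) + y₀) * p := mul_le_mul_of_nonneg_right h1 hp0.le
      have h3 : ((y₀ + σ * r / 2) + y₀) * p = (y₀ + σ * r / 2) * p + y₀ * p := by ring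
      linarith [hZm_lb, hY0_lb]
    have hD_pos : 0 < Zm + Y0 :=
      lt_of_lt_of_le (mul_pos (by linarith : (0:ℝ) < 3 * η / 2) hp0) hD_lb
    have hdiffsq : Y0 ^ 2 - Zm ^ 2 = l * (y₀ ^ 2 - (y₀ + σ * r / 2) ^ 2) := by
      rw [hZmsq, hY0sq]; ring
    have e_id : (σ * r / 2 + Y0 - Zm) * (Zm + Y0)
        = σ * r / 2 * (1 - l) * (Zm + Y0) + σ * r / 2 * l * ((Zm + Y0) - (2 * y₀ + σ * r / 2)) := by
      linear_combination hdiffsq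
    have w1 : σ * r / 2 * (1 - l) * (Zm + Y0) ≤ σ * k / 2 * r * (t - t₀) * (Zm + Y0) := by
      have h1 : σ * r / 2 * (1 - l) ≤ σ * r / 2 * (k * (t - t₀)) :=
        mul_le_mul_of_nonneg_left h1ml hσr2
      have h2 := mul_le_mul_of_nonneg_right h1 hD_pos.le
      have h3 : σ * r / 2 * (k * (t - t₀)) * (Zm + Y0) = σ * k / 2 * r * (t - t₀) * (Zm + Y0) := by
        ring
      linarith
    have w2 : (Zm + Y0) - (2 * y₀ + σ * r / 2) ≤ 3 / 2 * q := by
      linarith [hZm_ub, hY0_ub, hq0]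
    have w3 : σ * r / 2 * l * ((Zm + Y0) - (2 * y₀ + σ * r / 2)) ≤ σ * r / 2 * l * (3 / 2 * q) :=
      mul_le_mul_of_nonneg_left w2 (mul_nonneg hσr2 hl0.le)
    have w4 : σ * r / 2 * l * (3 / 2 * q) ≤ 2 * (α * σ * r * (t - t₀) * p / η) := by
      have h1 : l * q ≤ p * q := mul_le_mul_of_nonneg_right hlp hq0
      have h5 : σ * r / 2 * l * (3 / 2 * q) = 3 / 4 * (σ * r) * (l * q) := by ring
      have h6 : 3 / 4 * (σ * r) * (l * q) ≤ 3 / 4 * (σ * r) * (p * q) :=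
        mul_le_mul_of_nonneg_left h1 (by linarith : (0:ℝ) ≤ 3 / 4 * (σ * r))
      have h7 : p * q ≤ p * (2 * α * (t - t₀) / η) := mul_le_mul_of_nonneg_left hq_ub hp0.le
      have h8 : 3 / 4 * (σ * r) * (p * q) ≤ 3 / 4 * (σ * r) * (p * (2 * α * (t - t₀) / η)) :=
        mul_le_mul_of_nonneg_left h7 (by linarith : (0:ℝ) ≤ 3 / 4 * (σ * r))
      have h9 : 3 / 4 * (σ * r) * (p * (2 * α * (t - t₀) / η))
          = 3 / 2 * (α * σ * r * (t - t₀) * p / η) := by ring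
      have h10 : 0 ≤ α * σ * r * (t - t₀) * p / η :=
        div_nonneg (mul_nonneg (mul_nonneg (mul_nonneg (mul_nonneg hα hσ.le) hr'.le) hτ0)
          hp0.le) hη.le
      linarith
    have w5 : 2 * (α * σ * r * (t - t₀) * p / η)
        ≤ 4 * α * σ / (3 * η ^ 2) * ET * r * (t - t₀) * (Zm + Y0) := by
      have h1 : 4 * α * σ / (3 * η ^ 2) * r * (t - t₀) * (3 * η / 2 * p)
          = 2 * (α * σ * r * (t - t₀) * p / η) := by
        field_simp
        ring
      have h2 : 4 * α * σ / (3 * η ^ 2) * r * (t - t₀) * (3 * η / 2 * p)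
          ≤ 4 * α * σ / (3 * η ^ 2) * r * (t - t₀) * (Zm + Y0) :=
        mul_le_mul_of_nonneg_left hD_lb hcoef
      have h4 : 4 * α * σ / (3 * η ^ 2) * ET * r * (t - t₀) * (Zm + Y0)
          - 4 * α * σ / (3 * η ^ 2) * r * (t - t₀) * (Zm + Y0)
          = (4 * α * σ / (3 * η ^ 2) * r * (t - t₀) * (Zm + Y0)) * (ET - 1) := by ring
      have h5 : 0 ≤ (4 * α * σ / (3 * η ^ 2) * r * (t - t₀) * (Zm + Y0)) * (ET - 1) :=
        mul_nonneg (mul_nonneg hcoef hD_pos.le) (by linarith)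
      linarith
    have main : (σ * r / 2 + Y0 - Zm) * (Zm + Y0) ≤ (C * r * (t - t₀)) * (Zm + Y0) := by
      have hrhs : (C * r * (t - t₀)) * (Zm + Y0)
          = σ * k / 2 * r * (t - t₀) * (Zm + Y0)
            + 4 * α * σ / (3 * η ^ 2) * ET * r * (t - t₀) * (Zm + Y0) := by
        rw [hCdef]; ring
      linarith [e_id, w1, w3, w4, w5]
    exact le_of_mul_le_mul_right main hD_pos
  -- conclude
  have hC0 : 0 ≤ C := by
    rw [hCdef]
    have h1 : 0 ≤ σ * k / 2 := by linarith [mul_pos hσ hk]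
    linarith [mul_nonneg hAσ (by linarith : (0:ℝ) ≤ ET)]
  constructor
  · rw [hcir, abs_le]
    constructor
    · linarith [side2, key2]
    · linarith [side1, key1]
  · exact mul_le_mul_of_nonneg_left hτθ (mul_nonneg hC0 hr'.le)
end

section
/- (Corollary to Proposition 3.) Let α ≥ 0, σ > 0, k > 0, T > 0, 0 ≤ θ ≤ T, t₀ ≥ 0 and r > 0. Let φ : [t₀, t₀+θ] → ℝ be continuous with |φ(t)| ≤ r on [t₀, t₀+θ]. Let y be a differentiable function on [t₀, t₀+θ] with y(t₀) = y₀ ≥ σr, y(t) > (σ/2)r for all t ∈ [t₀, t₀+θ], and y′(t) = α/(y(t) + (σ/2)φ(t)) − (k/2)(y(t) + (σ/2)φ(t)) on [t₀, t₀+θ]. Let y⁰(t) = [y₀² e^{−k(t−t₀)} + (2α/k)(1 − e^{−k(t−t₀)})]^{1/2}. Then |y(t) − y⁰(t)| ≤ (D₁ + D₂/y₀²)·r·θ for all t ∈ [t₀, t₀+θ], where D₁ = σk/2 and D₂ = (4ασ/3)·e^{kT/2}. -/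
/-- exp z - 1 ≤ (4/3) z exp(z/2) for 0 ≤ z ≤ 1 -/
lemma cir_exp_ineq {z : ℝ} (h0 : 0 ≤ z) (h1 : z ≤ 1) :
    Real.exp z - 1 ≤ 4 / 3 * z * Real.exp (z / 2) := by
  have hb : |Real.exp (z/2) - ∑ i ∈ Finset.range 2, (z/2)^i / i.factorial|
      ≤ |z/2|^2 * ((2:ℕ).succ / ((2:ℕ).factorial * 2)) :=
    Real.exp_bound (by rw [abs_of_nonneg (by linarith)]; linarith) (by norm_num)
  simp only [Finset.sum_range_succ, Finset.sum_range_zero] at hb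
  norm_num at hb
  rw [abs_le] at hb
  have h2 : Real.exp (z/2) ≤ 1 + z/2 + 3/4 * (z/2)^2 := by nlinarith [hb.2]
  have h3 : 1 - z/2 ≤ Real.exp (-(z/2)) := by
    have := Real.add_one_le_exp (-(z/2)); linarith
  have h4 : Real.exp z - 1 = Real.exp (z/2) * (Real.exp (z/2) - Real.exp (-(z/2))) := by
    rw [mul_sub, ← Real.exp_add, ← Real.exp_add]; norm_num
  have h5 : Real.exp (z/2) - Real.exp (-(z/2)) ≤ z + 3/16 * z^2 := by nlinarith
  have h6 : z + 3/16 * z^2 ≤ 4/3 * z := by nlinarith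
  have h7 : (0:ℝ) < Real.exp (z/2) := Real.exp_pos _
  calc Real.exp z - 1 = Real.exp (z/2) * (Real.exp (z/2) - Real.exp (-(z/2))) := h4
    _ ≤ Real.exp (z/2) * (4/3 * z) := by
        apply mul_le_mul_of_nonneg_left (h5.trans h6) h7.le
    _ = 4/3 * z * Real.exp (z/2) := by ring

/-- positivity of the expression under the sqrt -/
lemma cirQ_pos {k α t₀ c t : ℝ} (hk : 0 < k) (hα : 0 ≤ α) (hc : 0 < c) (ht : t₀ ≤ t) :
    0 < c ^ 2 * Real.exp (-(k * (t - t₀))) + 2 * α / k * (1 - Real.exp (-(k * (t - t₀)))) := by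
  have h1 : 0 < c ^ 2 * Real.exp (-(k * (t - t₀))) := by positivity
  have h2 : Real.exp (-(k * (t - t₀))) ≤ 1 := by
    rw [Real.exp_le_one_iff]; nlinarith
  have h3 : 0 ≤ 2 * α / k := by positivity
  nlinarith

lemma cirY0_pos {k α t₀ c t : ℝ} (hk : 0 < k) (hα : 0 ≤ α) (hc : 0 < c) (ht : t₀ ≤ t) :
    0 < cirY0 k α t₀ c t :=
  Real.sqrt_pos.2 (cirQ_pos hk hα hc ht)

lemma cirY0_sq {k α t₀ c t : ℝ} (hk : 0 < k) (hα : 0 ≤ α) (hc : 0 < c) (ht : t₀ ≤ t) :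
    (cirY0 k α t₀ c t) ^ 2
      = c ^ 2 * Real.exp (-(k * (t - t₀))) + 2 * α / k * (1 - Real.exp (-(k * (t - t₀)))) :=
  Real.sq_sqrt (cirQ_pos hk hα hc ht).le

lemma cirY0_at_t₀ {k α t₀ c : ℝ} (hc : 0 ≤ c) : cirY0 k α t₀ c t₀ = c := by
  unfold cirY0
  simp [Real.sqrt_sq hc]

/-- derivative of the explicit solution -/
lemma cirY0_hasDerivAt {k α t₀ c t : ℝ} (hk : 0 < k) (hα : 0 ≤ α) (hc : 0 < c) (ht : t₀ ≤ t) :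
    HasDerivAt (fun s => cirY0 k α t₀ c s)
      (α / cirY0 k α t₀ c t - k / 2 * cirY0 k α t₀ c t) t := by
  have hq : HasDerivAt (fun s => c ^ 2 * Real.exp (-(k * (s - t₀))) +
      2 * α / k * (1 - Real.exp (-(k * (s - t₀)))))
      (c ^ 2 * (Real.exp (-(k * (t - t₀))) * (-k)) +
        2 * α / k * (-(Real.exp (-(k * (t - t₀))) * (-k)))) t := by
    have h1 : HasDerivAt (fun s : ℝ => -(k * (s - t₀))) (-k) t := by
      exact ((((hasDerivAt_id t).sub_const t₀).const_mul k).neg).congr_deriv (by simp)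
    have h2 : HasDerivAt (fun s : ℝ => Real.exp (-(k * (s - t₀))))
        (Real.exp (-(k * (t - t₀))) * (-k)) t := h1.exp
    exact ((h2.const_mul (c ^ 2)).add (((h2.const_sub 1)).const_mul (2 * α / k)))
  have hpos := cirQ_pos (t := t) (c := c) hk hα hc ht
  have := hq.sqrt (ne_of_gt hpos)
  convert this using 1
  · rfl
  have hs : cirY0 k α t₀ c t = Real.sqrt (c ^ 2 * Real.exp (-(k * (t - t₀))) +
      2 * α / k * (1 - Real.exp (-(k * (t - t₀))))) := rfl
  have hsp : 0 < cirY0 k α t₀ c t := cirY0_pos hk hα hc ht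
  have hsq := cirY0_sq (t := t) (c := c) hk hα hc ht
  rw [← hs]
  have hsq' : k * (cirY0 k α t₀ c t) ^ 2
      = k * (c ^ 2 * Real.exp (-(k * (t - t₀)))) + 2 * α * (1 - Real.exp (-(k * (t - t₀)))) := by
    rw [hsq]; field_simp
  field_simp
  linear_combination (-1 : ℝ) * hsq'

lemma cir_fence_upper (α σ k θ t₀ r y₀ : ℝ) (hα : 0 ≤ α) (hσ : 0 < σ) (hk : 0 < k)
    (hθ0 : 0 ≤ θ) (hr : 0 < r)
    (φ : ℝ → ℝ) (hφr : ∀ t ∈ Set.Icc t₀ (t₀ + θ), |φ t| ≤ r)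
    (y : ℝ → ℝ) (hinit : y t₀ = y₀) (hy₀ : σ * r ≤ y₀)
    (hder : ∀ t ∈ Set.Icc t₀ (t₀ + θ), HasDerivWithinAt y
      (α / (y t + σ / 2 * φ t) - k / 2 * (y t + σ / 2 * φ t)) (Set.Icc t₀ (t₀ + θ)) t) :
    ∀ t ∈ Set.Icc t₀ (t₀ + θ), y t ≤ σ * r / 2 + cirY0 k α t₀ (y₀ - σ * r / 2) t := by
  have hb : 0 < σ * r := by positivity
  set c₀ : ℝ := y₀ - σ * r / 2 with hc₀def
  have hc₀ : 0 < c₀ := by simp only [hc₀def]; linarith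
  have hcont : ContinuousOn y (Set.Icc t₀ (t₀ + θ)) :=
    fun x hx => (hder x hx).continuousWithinAt
  have hderI : ∀ x ∈ Set.Ico t₀ (t₀ + θ), HasDerivWithinAt y
      (α / (y x + σ / 2 * φ x) - k / 2 * (y x + σ / 2 * φ x)) (Set.Ici x) x := by
    intro x hx
    exact (hder x (Set.Ico_subset_Icc_self hx)).mono_of_mem_nhdsWithin (Icc_mem_nhdsGE_of_mem hx)
  have key : ∀ ε > (0:ℝ), ∀ x ∈ Set.Icc t₀ (t₀ + θ),
      y x ≤ σ * r / 2 + cirY0 k α t₀ c₀ x + ε * (x - t₀) := by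
    intro ε hε
    have hS : ∀ x ∈ Set.Icc t₀ (t₀ + θ), HasDerivAt (fun s => cirY0 k α t₀ c₀ s)
        (α / cirY0 k α t₀ c₀ x - k / 2 * cirY0 k α t₀ c₀ x) x :=
      fun x hx => cirY0_hasDerivAt hk hα hc₀ hx.1
    refine image_le_of_deriv_right_lt_deriv_boundary' (a := t₀) (b := t₀ + θ)
      (B := fun x => σ * r / 2 + cirY0 k α t₀ c₀ x + ε * (x - t₀))
      (B' := fun x => (α / cirY0 k α t₀ c₀ x - k / 2 * cirY0 k α t₀ c₀ x) + ε)
      hcont hderI ?_ ?_ ?_ ?_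
    · show y t₀ ≤ σ * r / 2 + cirY0 k α t₀ c₀ t₀ + ε * (t₀ - t₀)
      rw [hinit, cirY0_at_t₀ hc₀.le]
      simp only [hc₀def, sub_self, mul_zero, add_zero]
      linarith
    · intro x hx
      exact ((continuousWithinAt_const.add
        ((hS x hx).continuousAt.continuousWithinAt)).add
        (((continuousWithinAt_id.sub continuousWithinAt_const).const_mul ε)))
    · intro x hx
      have h1 := ((hS x (Set.Ico_subset_Icc_self hx)).hasDerivWithinAt
        (s := Set.Ici x)).const_add (σ * r / 2)
      have h2 : HasDerivWithinAt (fun s : ℝ => ε * (s - t₀)) ε (Set.Ici x) x := by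
        simpa using (((hasDerivAt_id x).sub_const t₀).const_mul ε).hasDerivWithinAt
      exact h1.add h2
    · intro x hx hcontact
      have hx' : x ∈ Set.Icc t₀ (t₀ + θ) := Set.Ico_subset_Icc_self hx
      set s := cirY0 k α t₀ c₀ x with hsdef
      have hs : 0 < s := cirY0_pos hk hα hc₀ hx'.1
      have hτ : 0 ≤ ε * (x - t₀) := mul_nonneg hε.le (by linarith [hx'.1])
      have hφx : -r ≤ φ x := (abs_le.1 (hφr x hx')).1
      set w := y x + σ / 2 * φ x with hwdef
      have hw : s + ε * (x - t₀) ≤ w := by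
        have : -(σ * r / 2) ≤ σ / 2 * φ x := by nlinarith
        simp only [hwdef]; rw [hcontact]; linarith
      have hm : 0 < s + ε * (x - t₀) := by linarith
      have hw0 : 0 < w := lt_of_lt_of_le hm hw
      have hsw : s ≤ w := le_trans (by linarith) hw
      have hdiv : α / w ≤ α / s := div_le_div_of_nonneg_left hα hs hsw
      have hks : k / 2 * s ≤ k / 2 * w := mul_le_mul_of_nonneg_left hsw (by positivity)
      show α / w - k / 2 * w < α / s - k / 2 * s + ε
      linarith
  intro t ht
  have hfin : ∀ ε > (0:ℝ), y t ≤ σ * r / 2 + cirY0 k α t₀ c₀ t + ε := by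
    intro ε hε
    have hθ1 : (0:ℝ) < θ + 1 := by linarith
    have h := key (ε / (θ + 1)) (by positivity) t ht
    have : ε / (θ + 1) * (t - t₀) ≤ ε := by
      rw [div_mul_eq_mul_div, div_le_iff₀ hθ1]
      have h1 : t - t₀ ≤ θ := by linarith [ht.2]
      have h2 : 0 ≤ t - t₀ := by linarith [ht.1]
      nlinarith
    linarith
  linarith [le_of_forall_pos_le_add hfin]

lemma cir_fence_lower (α σ k θ t₀ r y₀ : ℝ) (hα : 0 ≤ α) (hσ : 0 < σ) (hk : 0 < k)
    (hθ0 : 0 ≤ θ) (hr : 0 < r)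
    (φ : ℝ → ℝ) (hφr : ∀ t ∈ Set.Icc t₀ (t₀ + θ), |φ t| ≤ r)
    (y : ℝ → ℝ) (hinit : y t₀ = y₀) (hy₀ : σ * r ≤ y₀)
    (hpos : ∀ t ∈ Set.Icc t₀ (t₀ + θ), σ / 2 * r < y t)
    (hder : ∀ t ∈ Set.Icc t₀ (t₀ + θ), HasDerivWithinAt y
      (α / (y t + σ / 2 * φ t) - k / 2 * (y t + σ / 2 * φ t)) (Set.Icc t₀ (t₀ + θ)) t) :
    ∀ t ∈ Set.Icc t₀ (t₀ + θ), cirY0 k α t₀ (y₀ + σ * r / 2) t - σ * r / 2 ≤ y t := by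
  have hb : 0 < σ * r := by positivity
  set c₁ : ℝ := y₀ + σ * r / 2 with hc₁def
  have hc₁ : 0 < c₁ := by simp only [hc₁def]; linarith
  have hcont : ContinuousOn (fun x => -y x) (Set.Icc t₀ (t₀ + θ)) :=
    fun x hx => ((hder x hx).continuousWithinAt).neg
  have hderI : ∀ x ∈ Set.Ico t₀ (t₀ + θ), HasDerivWithinAt (fun x => -y x)
      (-(α / (y x + σ / 2 * φ x) - k / 2 * (y x + σ / 2 * φ x))) (Set.Ici x) x := by
    intro x hx
    exact ((hder x (Set.Ico_subset_Icc_self hx)).mono_of_mem_nhdsWithin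
      (Icc_mem_nhdsGE_of_mem hx)).neg
  have key : ∀ ε > (0:ℝ), ∀ x ∈ Set.Icc t₀ (t₀ + θ),
      -y x ≤ σ * r / 2 - cirY0 k α t₀ c₁ x + ε * (x - t₀) := by
    intro ε hε
    have hS : ∀ x ∈ Set.Icc t₀ (t₀ + θ), HasDerivAt (fun s => cirY0 k α t₀ c₁ s)
        (α / cirY0 k α t₀ c₁ x - k / 2 * cirY0 k α t₀ c₁ x) x :=
      fun x hx => cirY0_hasDerivAt hk hα hc₁ hx.1
    refine image_le_of_deriv_right_lt_deriv_boundary' (a := t₀) (b := t₀ + θ)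
      (B := fun x => σ * r / 2 - cirY0 k α t₀ c₁ x + ε * (x - t₀))
      (B' := fun x => -(α / cirY0 k α t₀ c₁ x - k / 2 * cirY0 k α t₀ c₁ x) + ε)
      hcont hderI ?_ ?_ ?_ ?_
    · show -y t₀ ≤ σ * r / 2 - cirY0 k α t₀ c₁ t₀ + ε * (t₀ - t₀)
      rw [hinit, cirY0_at_t₀ hc₁.le]
      simp only [hc₁def, sub_self, mul_zero, add_zero]
      linarith
    · intro x hx
      exact ((continuousWithinAt_const.sub
        ((hS x hx).continuousAt.continuousWithinAt)).add
        (((continuousWithinAt_id.sub continuousWithinAt_const).const_mul ε)))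
    · intro x hx
      have hSd := ((hS x (Set.Ico_subset_Icc_self hx)).hasDerivWithinAt (s := Set.Ici x))
      have h2 : HasDerivWithinAt (fun s : ℝ => ε * (s - t₀)) ε (Set.Ici x) x := by
        simpa using (((hasDerivAt_id x).sub_const t₀).const_mul ε).hasDerivWithinAt
      exact ((hasDerivWithinAt_const x _ (σ * r / 2)).sub hSd).add h2 |>.congr_deriv (by ring)
    · intro x hx hcontact
      have hx' : x ∈ Set.Icc t₀ (t₀ + θ) := Set.Ico_subset_Icc_self hx
      set s := cirY0 k α t₀ c₁ x with hsdef
      have hs : 0 < s := cirY0_pos hk hα hc₁ hx'.1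
      have hτ : 0 ≤ ε * (x - t₀) := mul_nonneg hε.le (by linarith [hx'.1])
      have hφx : φ x ≤ r := (abs_le.1 (hφr x hx')).2
      have hφx' : -r ≤ φ x := (abs_le.1 (hφr x hx')).1
      set w := y x + σ / 2 * φ x with hwdef
      have hyx : y x = s - σ * r / 2 - ε * (x - t₀) := by
        have : -y x = σ * r / 2 - s + ε * (x - t₀) := hcontact
        linarith
      have hw1 : w ≤ s := by
        have : σ / 2 * φ x ≤ σ * r / 2 := by nlinarith
        simp only [hwdef]; rw [hyx]; linarith
      have hw0 : 0 < w := by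
        have h1 := hpos x hx'
        have : -(σ * r / 2) ≤ σ / 2 * φ x := by nlinarith
        simp only [hwdef]; nlinarith
      have hdiv : α / s ≤ α / w := div_le_div_of_nonneg_left hα hw0 hw1
      have hks : k / 2 * w ≤ k / 2 * s := mul_le_mul_of_nonneg_left hw1 (by positivity)
      show -(α / w - k / 2 * w) < -(α / s - k / 2 * s) + ε
      linarith
  intro t ht
  have hfin : ∀ ε > (0:ℝ), -y t ≤ σ * r / 2 - cirY0 k α t₀ c₁ t + ε := by
    intro ε hε
    have hθ1 : (0:ℝ) < θ + 1 := by linarith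
    have h := key (ε / (θ + 1)) (by positivity) t ht
    have : ε / (θ + 1) * (t - t₀) ≤ ε := by
      rw [div_mul_eq_mul_div, div_le_iff₀ hθ1]
      have h1 : t - t₀ ≤ θ := by linarith [ht.2]
      have h2 : 0 ≤ t - t₀ := by linarith [ht.1]
      nlinarith
    linarith
  linarith [le_of_forall_pos_le_add hfin]


lemma cir_sqrt_add_le {x A : ℝ} (hx : 0 < x) (hA : 0 ≤ A) :
    Real.sqrt (x ^ 2 + A) ≤ x + A / (2 * x) := by
  have h : x ^ 2 + A ≤ (x + A / (2 * x)) ^ 2 := by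
    have : (x + A / (2 * x)) ^ 2 = x ^ 2 + A + (A / (2 * x)) ^ 2 := by
      field_simp; ring
    nlinarith [sq_nonneg (A / (2 * x))]
  calc Real.sqrt (x ^ 2 + A) ≤ Real.sqrt ((x + A / (2 * x)) ^ 2) := Real.sqrt_le_sqrt h
    _ = x + A / (2 * x) := Real.sqrt_sq (by positivity)

set_option maxHeartbeats 4000000 in
/-- main algebraic inequality -/
lemma cir_main_ineq (k α θ T y₀ b τ : ℝ) (hk : 0 < k) (hα : 0 ≤ α) (hb : 0 < b)
    (hy₀ : b ≤ y₀) (hτ0 : 0 ≤ τ) (hτθ : τ ≤ θ) (hθT : θ ≤ T) :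
    b / 2 + Real.sqrt ((y₀ - b / 2) ^ 2 * Real.exp (-(k * τ)) + 2 * α / k * (1 - Real.exp (-(k * τ))))
      - Real.sqrt (y₀ ^ 2 * Real.exp (-(k * τ)) + 2 * α / k * (1 - Real.exp (-(k * τ))))
    ≤ b * k / 2 * θ + 4 * α * b / 3 * Real.exp (k * T / 2) * θ / y₀ ^ 2 := by
  have hy₀0 : 0 < y₀ := lt_of_lt_of_le hb hy₀
  have hu0 : 0 < Real.exp (-(k * τ) / 2) := Real.exp_pos _
  set u := Real.exp (-(k * τ) / 2) with hudef
  have hu1 : u ≤ 1 := Real.exp_le_one_iff.2 (by nlinarith)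
  have hE : Real.exp (-(k * τ)) = u ^ 2 := by
    rw [hudef, sq, ← Real.exp_add]; ring_nf
  rw [hE]
  clear_value u
  set A := 2 * α / k * (1 - u ^ 2) with hAdef
  clear_value A
  have hA0 : 0 ≤ A := by
    rw [hAdef]; exact mul_nonneg (by positivity) (by nlinarith)
  set c₀ := y₀ - b / 2 with hc₀def
  clear_value c₀
  have hc₀b : b / 2 ≤ c₀ := by rw [hc₀def]; linarith
  have hc₀0 : 0 < c₀ := by linarith
  have hc₀y : y₀ / 2 ≤ c₀ := by rw [hc₀def]; linarith
  have hcy : c₀ ≤ y₀ := by rw [hc₀def]; linarith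
  have hq : 0 < c₀ ^ 2 * u ^ 2 + A := by
    have h1 : 0 < c₀ ^ 2 * u ^ 2 := by positivity
    linarith
  have hq' : 0 < y₀ ^ 2 * u ^ 2 + A := by
    have h1 : 0 < y₀ ^ 2 * u ^ 2 := by positivity
    linarith
  set s := Real.sqrt (y₀ ^ 2 * u ^ 2 + A) with hsdef
  set s₀ := Real.sqrt (c₀ ^ 2 * u ^ 2 + A) with hs₀def
  have hs0 : 0 < s₀ := Real.sqrt_pos.2 hq
  have hss : 0 < s := Real.sqrt_pos.2 hq'
  have hsq : s ^ 2 = y₀ ^ 2 * u ^ 2 + A := Real.sq_sqrt hq'.le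
  have hs₀q : s₀ ^ 2 = c₀ ^ 2 * u ^ 2 + A := Real.sq_sqrt hq.le
  have hmono : s₀ ≤ s := by
    rw [hsdef, hs₀def]
    apply Real.sqrt_le_sqrt
    nlinarith [mul_nonneg (mul_nonneg (sub_nonneg.2 hcy) (by linarith : (0:ℝ) ≤ y₀ + c₀)) (sq_nonneg u)]
  clear_value s s₀
  have hu' : u ≠ 0 := ne_of_gt hu0
  have hy' : y₀ ≠ 0 := ne_of_gt hy₀0
  by_cases hcase : 1 ≤ k * θ
  · have h2 : b / 2 ≤ b * k / 2 * θ := by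
      have := mul_le_mul_of_nonneg_left hcase (by positivity : (0:ℝ) ≤ b / 2)
      linarith [this]
    have h3 : 0 ≤ 4 * α * b / 3 * Real.exp (k * T / 2) * θ / y₀ ^ 2 := by
      have hθ0 : 0 ≤ θ := le_trans hτ0 hτθ
      positivity
    linarith
  · push_neg at hcase
    have f5 : s ≤ y₀ * u + A / (2 * (y₀ * u)) := by
      have h := cir_sqrt_add_le (x := y₀ * u) (A := A) (by positivity) hA0
      rw [hsdef, show y₀ ^ 2 * u ^ 2 = (y₀ * u) ^ 2 by ring]
      exact h
    have f6 : s₀ ≤ c₀ * u + A / (2 * (c₀ * u)) := by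
      have h := cir_sqrt_add_le (x := c₀ * u) (A := A) (by positivity) hA0
      rw [hs₀def, show c₀ ^ 2 * u ^ 2 = (c₀ * u) ^ 2 by ring]
      exact h
    set G := 2 * y₀ - b / 2 with hGdef
    clear_value G
    have hG32 : 3 / 2 * y₀ ≤ G := by rw [hGdef]; linarith
    have hG0 : 0 < G := by linarith
    set W := G * u + 3 * A / (2 * (u * y₀)) with hWdef
    clear_value W
    have hGu0 : 0 < G * u := by positivity
    have e2 : s + s₀ ≤ W := by
      have hd : A / (2 * (c₀ * u)) ≤ A / (y₀ * u) := by
        apply div_le_div_of_nonneg_left hA0 (by positivity)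
        nlinarith
      have hAA : A / (2 * (y₀ * u)) + A / (y₀ * u) = 3 * A / (2 * (u * y₀)) := by
        field_simp
        ring
      have hsum : y₀ * u + c₀ * u = G * u := by rw [hGdef, hc₀def]; ring
      calc s + s₀ ≤ (y₀ * u + A / (2 * (y₀ * u))) + (c₀ * u + A / (2 * (c₀ * u))) := by linarith
        _ ≤ G * u + (A / (2 * (y₀ * u)) + A / (y₀ * u)) := by linarith
        _ = W := by rw [hAA, hWdef]
    have e1 : (s - s₀) * (s + s₀) = b / 2 * u ^ 2 * G := by
      have h : (s - s₀) * (s + s₀) = s ^ 2 - s₀ ^ 2 := by ring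
      rw [h, hsq, hs₀q, hc₀def, hGdef]; ring
    have claim1 : b / 2 + s₀ - s ≤ b / 2 * (1 - u) + b * A / (2 * (u ^ 2 * y₀ ^ 2)) := by
      set c := b / 2 * u - b * A / (2 * (u ^ 2 * y₀ ^ 2)) with hcdef
      clear_value c
      rcases le_or_gt c 0 with hc | hc
      · have h1 : 0 ≤ s - s₀ := by linarith
        rw [hcdef] at hc
        linarith
      · have hW32 : 3 / 2 * (u ^ 2 * y₀) ≤ W := by
          have h1 : 3 / 2 * (u ^ 2 * y₀) ≤ G * u := by
            have p1 : u ^ 2 ≤ u := by nlinarith [hu0, hu1]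
            have p2 : 3 / 2 * (u ^ 2 * y₀) ≤ 3 / 2 * (u * y₀) := by nlinarith [mul_le_mul_of_nonneg_right p1 hy₀0.le]
            have p3 : 3 / 2 * (u * y₀) ≤ G * u := by nlinarith [mul_le_mul_of_nonneg_right hG32 hu0.le]
            linarith
          have h2 : 0 ≤ 3 * A / (2 * (u * y₀)) := by positivity
          rw [hWdef]; linarith
        have e3 : c * W ≤ b / 2 * u ^ 2 * G := by
          have expand : b / 2 * u ^ 2 * G - c * W
              = b * A * W / (2 * (u ^ 2 * y₀ ^ 2)) - 3 * b * A / (4 * y₀) := by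
            rw [hcdef, hWdef]
            field_simp
            ring
          have h2 : 3 * b * A / (4 * y₀) ≤ b * A * W / (2 * (u ^ 2 * y₀ ^ 2)) := by
            rw [div_le_div_iff₀ (by positivity) (by positivity)]
            have key : 0 ≤ b * A * y₀ * (W - 3 / 2 * (u ^ 2 * y₀)) :=
              mul_nonneg (mul_nonneg (mul_nonneg hb.le hA0) hy₀0.le) (sub_nonneg.2 hW32)
            linarith [key, sq_nonneg u]
          linarith
        have e4 : c * (s + s₀) ≤ c * W := mul_le_mul_of_nonneg_left e2 hc.le
        have e6 : c ≤ s - s₀ := by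
          have e5 : c * (s + s₀) ≤ (s - s₀) * (s + s₀) := by rw [e1]; linarith
          exact le_of_mul_le_mul_right e5 (by linarith)
        rw [hcdef] at e6
        linarith
    have claim2 : b / 2 * (1 - u) ≤ b * k / 2 * θ / 2 := by
      have h1 : 1 - k * τ / 2 ≤ u := by
        have h := Real.add_one_le_exp (-(k * τ) / 2)
        rw [hudef]; linarith
      have h2 : 1 - u ≤ k * τ / 2 := by linarith
      have h3 : k * τ ≤ k * θ := mul_le_mul_of_nonneg_left hτθ hk.le
      nlinarith [mul_le_mul_of_nonneg_left h2 (by positivity : (0:ℝ) ≤ b / 2),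
        mul_le_mul_of_nonneg_left h3 (by positivity : (0:ℝ) ≤ b / 4)]
    have claim3 : b * A / (2 * (u ^ 2 * y₀ ^ 2))
        ≤ 4 * α * b / 3 * Real.exp (k * T / 2) * θ / y₀ ^ 2 := by
      have hu2 : u ^ 2 = Real.exp (-(k * τ)) := hE.symm
      have hu2inv : u ^ 2 * Real.exp (k * τ) = 1 := by
        rw [hu2, ← Real.exp_add]; simp
      have hinv : (1 - u ^ 2) / u ^ 2 = Real.exp (k * τ) - 1 := by
        rw [eq_sub_iff_add_eq, div_add' _ _ _ (by positivity), div_eq_iff (by positivity)]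
        nlinarith [hu2inv]
      have hchain : Real.exp (k * τ) - 1 ≤ 4 / 3 * (k * θ) * Real.exp (k * T / 2) := by
        have h1 : Real.exp (k * τ) - 1 ≤ Real.exp (k * θ) - 1 := by
          have h := Real.exp_le_exp.2 (mul_le_mul_of_nonneg_left hτθ hk.le)
          linarith
        have h0θ : 0 ≤ k * θ := mul_nonneg hk.le (le_trans hτ0 hτθ)
        have h2 : Real.exp (k * θ) - 1 ≤ 4 / 3 * (k * θ) * Real.exp (k * θ / 2) :=
          cir_exp_ineq h0θ hcase.le
        have h3 : Real.exp (k * θ / 2) ≤ Real.exp (k * T / 2) := by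
          apply Real.exp_le_exp.2
          have := mul_le_mul_of_nonneg_left hθT hk.le
          linarith
        have h4 : 4 / 3 * (k * θ) * Real.exp (k * θ / 2)
            ≤ 4 / 3 * (k * θ) * Real.exp (k * T / 2) := by
          apply mul_le_mul_of_nonneg_left h3 (by positivity)
        linarith
      have lhs_eq : b * A / (2 * (u ^ 2 * y₀ ^ 2))
          = b * α / (k * y₀ ^ 2) * ((1 - u ^ 2) / u ^ 2) := by
        rw [hAdef]
        field_simp
      rw [lhs_eq, hinv]
      have hpos : 0 ≤ b * α / (k * y₀ ^ 2) := by positivity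
      calc b * α / (k * y₀ ^ 2) * (Real.exp (k * τ) - 1)
          ≤ b * α / (k * y₀ ^ 2) * (4 / 3 * (k * θ) * Real.exp (k * T / 2)) :=
            mul_le_mul_of_nonneg_left hchain hpos
        _ = 4 * α * b / 3 * Real.exp (k * T / 2) * θ / y₀ ^ 2 := by
            field_simp
    have hθ0 : 0 ≤ θ := le_trans hτ0 hτθ
    have hbk : 0 ≤ b * k / 2 * θ := by positivity
    linarith

set_option maxHeartbeats 1000000 in
lemma cir_convex (k α t₀ y₀ d t : ℝ) (hk : 0 < k) (hα : 0 ≤ α) (hd : 0 ≤ d)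
    (hdy : d ≤ y₀) (ht : t₀ ≤ t) :
    2 * cirY0 k α t₀ y₀ t ≤ cirY0 k α t₀ (y₀ - d) t + cirY0 k α t₀ (y₀ + d) t := by
  have hy₀ : 0 ≤ y₀ := le_trans hd hdy
  have hE0 : 0 < Real.exp (-(k * (t - t₀))) := Real.exp_pos _
  have hE1 : Real.exp (-(k * (t - t₀))) ≤ 1 := Real.exp_le_one_iff.2 (by nlinarith)
  set E := Real.exp (-(k * (t - t₀))) with hEdef
  clear_value E
  have hA0 : 0 ≤ 2 * α / k * (1 - E) := mul_nonneg (by positivity) (by linarith)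
  set A := 2 * α / k * (1 - E) with hAdef
  clear_value A
  unfold cirY0
  rw [← hEdef, ← hAdef]
  have hq : 0 ≤ y₀ ^ 2 * E + A := by positivity
  have hq₀ : 0 ≤ (y₀ - d) ^ 2 * E + A := by positivity
  have hq₁ : 0 ≤ (y₀ + d) ^ 2 * E + A := by positivity
  set s := Real.sqrt (y₀ ^ 2 * E + A) with hsdef
  set s₀ := Real.sqrt ((y₀ - d) ^ 2 * E + A) with hs₀def
  set s₁ := Real.sqrt ((y₀ + d) ^ 2 * E + A) with hs₁def
  have hs : 0 ≤ s := Real.sqrt_nonneg _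
  have hs0 : 0 ≤ s₀ := Real.sqrt_nonneg _
  have hs1 : 0 ≤ s₁ := Real.sqrt_nonneg _
  have hsq : s ^ 2 = y₀ ^ 2 * E + A := Real.sq_sqrt hq
  have hs₀q : s₀ ^ 2 = (y₀ - d) ^ 2 * E + A := Real.sq_sqrt hq₀
  have hs₁q : s₁ ^ 2 = (y₀ + d) ^ 2 * E + A := Real.sq_sqrt hq₁
  have hkey : y₀ ^ 2 * E + A - d ^ 2 * E ≤ s₀ * s₁ := by
    have hm : s₀ * s₁ = Real.sqrt (((y₀ - d) ^ 2 * E + A) * ((y₀ + d) ^ 2 * E + A)) :=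
      (Real.sqrt_mul hq₀ _).symm
    have hpoly : (y₀ ^ 2 * E + A - d ^ 2 * E) ^ 2
        ≤ ((y₀ - d) ^ 2 * E + A) * ((y₀ + d) ^ 2 * E + A) := by
      nlinarith [mul_nonneg (mul_nonneg (sq_nonneg d) hE0.le) hA0]
    calc y₀ ^ 2 * E + A - d ^ 2 * E ≤ |y₀ ^ 2 * E + A - d ^ 2 * E| := le_abs_self _
      _ = Real.sqrt ((y₀ ^ 2 * E + A - d ^ 2 * E) ^ 2) := (Real.sqrt_sq_eq_abs _).symm
      _ ≤ Real.sqrt (((y₀ - d) ^ 2 * E + A) * ((y₀ + d) ^ 2 * E + A)) :=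
          Real.sqrt_le_sqrt hpoly
      _ = s₀ * s₁ := hm.symm
  clear_value s s₀ s₁
  have hsq2 : (2 * s) ^ 2 ≤ (s₀ + s₁) ^ 2 := by nlinarith [hkey, hsq, hs₀q, hs₁q]
  calc 2 * s = Real.sqrt ((2 * s) ^ 2) := (Real.sqrt_sq (by linarith)).symm
    _ ≤ Real.sqrt ((s₀ + s₁) ^ 2) := Real.sqrt_le_sqrt hsq2
    _ = s₀ + s₁ := Real.sqrt_sq (by linarith)


set_option maxHeartbeats 1000000 in
theorem stmt_9 (α σ k T θ t₀ r y₀ : ℝ) (hα : 0 ≤ α) (hσ : 0 < σ) (hk : 0 < k)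
    (hT : 0 < T) (hθ0 : 0 ≤ θ) (hθT : θ ≤ T) (ht₀ : 0 ≤ t₀) (hr : 0 < r)
    (φ : ℝ → ℝ) (hφ : ContinuousOn φ (Set.Icc t₀ (t₀ + θ)))
    (hφr : ∀ t ∈ Set.Icc t₀ (t₀ + θ), |φ t| ≤ r)
    (y : ℝ → ℝ) (hinit : y t₀ = y₀) (hy₀ : σ * r ≤ y₀)
    (hpos : ∀ t ∈ Set.Icc t₀ (t₀ + θ), σ / 2 * r < y t)
    (hder : ∀ t ∈ Set.Icc t₀ (t₀ + θ), HasDerivWithinAt y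
      (α / (y t + σ / 2 * φ t) - k / 2 * (y t + σ / 2 * φ t)) (Set.Icc t₀ (t₀ + θ)) t) :
    let D₁ : ℝ := σ * k / 2
    let D₂ : ℝ := 4 * α * σ / 3 * Real.exp (k * T / 2)
    ∀ t ∈ Set.Icc t₀ (t₀ + θ),
      |y t - cirY0 k α t₀ y₀ t| ≤ (D₁ + D₂ / y₀ ^ 2) * r * θ := by
  intro D₁ D₂ t ht
  have hb : 0 < σ * r := by positivity
  have hup := cir_fence_upper α σ k θ t₀ r y₀ hα hσ hk hθ0 hr φ hφr y hinit hy₀ hder t ht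
  have hlo := cir_fence_lower α σ k θ t₀ r y₀ hα hσ hk hθ0 hr φ hφr y hinit hy₀ hpos hder t ht
  have hcv := cir_convex k α t₀ y₀ (σ * r / 2) t hk hα (by positivity) (by linarith) ht.1
  have hmain := cir_main_ineq k α θ T y₀ (σ * r) (t - t₀) hk hα hb hy₀
    (by linarith [ht.1]) (by linarith [ht.2]) hθT
  have hid : ∀ c : ℝ, Real.sqrt (c ^ 2 * Real.exp (-(k * (t - t₀))) +
      2 * α / k * (1 - Real.exp (-(k * (t - t₀))))) = cirY0 k α t₀ c t := fun c => rfl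
  rw [hid, hid] at hmain
  have hD : σ * r * k / 2 * θ + 4 * α * (σ * r) / 3 * Real.exp (k * T / 2) * θ / y₀ ^ 2
      = (D₁ + D₂ / y₀ ^ 2) * r * θ := by
    simp only [D₁, D₂]
    field_simp
  rw [hD] at hmain
  rw [abs_le]
  constructor
  · -- lower: -(RHS) ≤ y t - cirY0 y₀
    have h1 : cirY0 k α t₀ y₀ t - y t
        ≤ cirY0 k α t₀ y₀ t - (cirY0 k α t₀ (y₀ + σ * r / 2) t - σ * r / 2) := by linarith
    have h2 : cirY0 k α t₀ y₀ t - (cirY0 k α t₀ (y₀ + σ * r / 2) t - σ * r / 2)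
        ≤ σ * r / 2 + cirY0 k α t₀ (y₀ - σ * r / 2) t - cirY0 k α t₀ y₀ t := by linarith
    linarith
  · have h1 : y t - cirY0 k α t₀ y₀ t
        ≤ σ * r / 2 + cirY0 k α t₀ (y₀ - σ * r / 2) t - cirY0 k α t₀ y₀ t := by linarith
    linarith
end

section
/- Let α ≥ 0, σ > 0, k > 0, r > 0, t₀ ≥ 0, and y₀ ≥ σr. Define y⁻(t) = [(y₀ + (σ/2)r)² e^{−k(t−t₀)} + (2α/k)(1 − e^{−k(t−t₀)})]^{1/2} − (σ/2)r and y⁺(t) = [(y₀ − (σ/2)r)² e^{−k(t−t₀)} + (2α/k)(1 − e^{−k(t−t₀)})]^{1/2} + (σ/2)r. Then for every t ≥ t₀, 0 ≤ y⁺(t) − y⁻(t) ≤ σr(1 − e^{−k(t−t₀)/2}) + (ασr/(k(y₀² − σ²r²/4)))·(e^{k(t−t₀)/2} − e^{−k(t−t₀)/2}). -/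
set_option maxHeartbeats 1000000 in
theorem stmt_10 (α σ k r t₀ y₀ : ℝ) (hα : 0 ≤ α) (hσ : 0 < σ) (hk : 0 < k)
    (hr : 0 < r) (ht₀ : 0 ≤ t₀) (hy₀ : σ * r ≤ y₀) :
    let yminus : ℝ → ℝ := fun t =>
      Real.sqrt ((y₀ + σ / 2 * r) ^ 2 * Real.exp (-(k * (t - t₀))) +
        2 * α / k * (1 - Real.exp (-(k * (t - t₀))))) - σ / 2 * r
    let yplus : ℝ → ℝ := fun t =>
      Real.sqrt ((y₀ - σ / 2 * r) ^ 2 * Real.exp (-(k * (t - t₀))) +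
        2 * α / k * (1 - Real.exp (-(k * (t - t₀))))) + σ / 2 * r
    ∀ t, t₀ ≤ t →
      0 ≤ yplus t - yminus t ∧
      yplus t - yminus t ≤ σ * r * (1 - Real.exp (-(k * (t - t₀)) / 2)) +
        α * σ * r / (k * (y₀ ^ 2 - σ ^ 2 * r ^ 2 / 4)) *
          (Real.exp (k * (t - t₀) / 2) - Real.exp (-(k * (t - t₀)) / 2)) := by
  intro yminus yplus t ht
  simp only [yminus, yplus]
  clear yminus yplus
  set c : ℝ := σ / 2 * r with hc
  set τ : ℝ := t - t₀ with hτ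
  set s : ℝ := Real.exp (-(k * τ) / 2) with hs
  have hc0 : 0 < c := by rw [hc]; positivity
  have hy2c : 2 * c ≤ y₀ := by rw [hc]; linarith
  have hy0 : 0 < y₀ := by linarith
  have hτ0 : 0 ≤ τ := by rw [hτ]; linarith
  have hs0 : 0 < s := Real.exp_pos _
  have hE : Real.exp (-(k * τ)) = s ^ 2 := by
    rw [hs, sq, ← Real.exp_add]; congr 1; ring
  have hexp : Real.exp (k * τ / 2) * s = 1 := by
    rw [hs, ← Real.exp_add]
    rw [show k * τ / 2 + -(k * τ) / 2 = 0 by ring, Real.exp_zero]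
  rw [hE]
  set B : ℝ := 2 * α / k with hB
  set A : ℝ := (y₀ + c) ^ 2 * s ^ 2 + B * (1 - s ^ 2) with hA
  set A' : ℝ := (y₀ - c) ^ 2 * s ^ 2 + B * (1 - s ^ 2) with hA'
  set D : ℝ := y₀ ^ 2 - c ^ 2 with hD
  set v : ℝ := B * (1 - s ^ 2) / (2 * s) with hv
  set u : ℝ := v / D with hu
  clear_value c τ s B A A' D v u
  have hs1 : s ≤ 1 := by
    rw [hs, Real.exp_le_one_iff]
    have := mul_nonneg hk.le hτ0
    linarith
  have hs2 : (0:ℝ) ≤ 1 - s ^ 2 := by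
    have h := mul_le_one₀ hs1 hs0.le hs1
    calc (0:ℝ) ≤ 1 - s * s := by linarith
      _ = 1 - s ^ 2 := by ring
  have hB0 : 0 ≤ B := by rw [hB]; positivity
  have hBs : 0 ≤ B * (1 - s ^ 2) := mul_nonneg hB0 hs2
  have hA0 : 0 ≤ A := by
    rw [hA]
    have := mul_nonneg (sq_nonneg (y₀ + c)) (sq_nonneg s)
    linarith
  have hA'0 : 0 ≤ A' := by
    rw [hA']
    have := mul_nonneg (sq_nonneg (y₀ - c)) (sq_nonneg s)
    linarith
  have hD0 : 0 < D := by
    rw [hD]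
    calc (0:ℝ) < (y₀ - c) * (y₀ + c) :=
          mul_pos (by linarith) (by linarith)
      _ = y₀ ^ 2 - c ^ 2 := by ring
  have hv0 : 0 ≤ v := by
    rw [hv]; exact div_nonneg hBs (by linarith)
  have hvs : 2 * s * v = B * (1 - s ^ 2) := by
    rw [hv]; field_simp
  have hu0 : 0 ≤ u := by rw [hu]; exact div_nonneg hv0 hD0.le
  -- lower bounds
  have l1 : (y₀ + c) * s ≤ Real.sqrt A := by
    have h : ((y₀ + c) * s) ^ 2 ≤ A := by
      rw [hA]
      have : ((y₀ + c) * s) ^ 2 = (y₀ + c) ^ 2 * s ^ 2 := by ring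
      linarith
    calc (y₀ + c) * s = Real.sqrt (((y₀ + c) * s) ^ 2) :=
          (Real.sqrt_sq (mul_nonneg (by linarith) hs0.le)).symm
      _ ≤ Real.sqrt A := Real.sqrt_le_sqrt h
  have l2 : (y₀ - c) * s ≤ Real.sqrt A' := by
    have h : ((y₀ - c) * s) ^ 2 ≤ A' := by
      rw [hA']
      have : ((y₀ - c) * s) ^ 2 = (y₀ - c) ^ 2 * s ^ 2 := by ring
      linarith
    calc (y₀ - c) * s = Real.sqrt (((y₀ - c) * s) ^ 2) :=
          (Real.sqrt_sq (mul_nonneg (by linarith) hs0.le)).symm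
      _ ≤ Real.sqrt A' := Real.sqrt_le_sqrt h
  -- upper bounds
  have u1 : Real.sqrt A ≤ (y₀ + c) * s + v / (y₀ + c) := by
    have hp : (0:ℝ) < y₀ + c := by linarith
    have hrhs : (0:ℝ) ≤ (y₀ + c) * s + v / (y₀ + c) := by
      have h1 := div_nonneg hv0 hp.le
      have h2 := mul_nonneg hp.le hs0.le
      linarith
    have h : A ≤ ((y₀ + c) * s + v / (y₀ + c)) ^ 2 := by
      have hexpand : ((y₀ + c) * s + v / (y₀ + c)) ^ 2 =
          (y₀ + c) ^ 2 * s ^ 2 + 2 * s * v + (v / (y₀ + c)) ^ 2 := by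
        field_simp; ring
      rw [hA, hexpand, hvs]
      linarith [sq_nonneg (v / (y₀ + c))]
    calc Real.sqrt A ≤ Real.sqrt (((y₀ + c) * s + v / (y₀ + c)) ^ 2) :=
          Real.sqrt_le_sqrt h
      _ = (y₀ + c) * s + v / (y₀ + c) := Real.sqrt_sq hrhs
  have u2 : Real.sqrt A' ≤ (y₀ - c) * s + v / (y₀ - c) := by
    have hp : (0:ℝ) < y₀ - c := by linarith
    have hrhs : (0:ℝ) ≤ (y₀ - c) * s + v / (y₀ - c) := by
      have h1 := div_nonneg hv0 hp.le
      have h2 := mul_nonneg hp.le hs0.le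
      linarith
    have h : A' ≤ ((y₀ - c) * s + v / (y₀ - c)) ^ 2 := by
      have hexpand : ((y₀ - c) * s + v / (y₀ - c)) ^ 2 =
          (y₀ - c) ^ 2 * s ^ 2 + 2 * s * v + (v / (y₀ - c)) ^ 2 := by
        field_simp; ring
      rw [hA', hexpand, hvs]
      linarith [sq_nonneg (v / (y₀ - c))]
    calc Real.sqrt A' ≤ Real.sqrt (((y₀ - c) * s + v / (y₀ - c)) ^ 2) :=
          Real.sqrt_le_sqrt h
      _ = (y₀ - c) * s + v / (y₀ - c) := Real.sqrt_sq hrhs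
  have hsum : Real.sqrt A + Real.sqrt A' ≤ 2 * y₀ * (s + u) := by
    have h1 : (0:ℝ) < y₀ + c := by linarith
    have h2 : (0:ℝ) < y₀ - c := by linarith
    have hvv : v / (y₀ + c) + v / (y₀ - c) = 2 * y₀ * u := by
      have h3 : y₀ ^ 2 - c ^ 2 ≠ 0 := by rw [← hD]; exact hD0.ne'
      rw [hu, hD]
      field_simp
      ring
    linarith [u1, u2]
  -- Part 1 : sqrt A ≤ sqrt A' + 2c
  have part1 : Real.sqrt A ≤ Real.sqrt A' + 2 * c := by
    have key : A ≤ (Real.sqrt A' + 2 * c) ^ 2 := by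
      have hsq : Real.sqrt A' ^ 2 = A' := Real.sq_sqrt hA'0
      have h1 : 0 ≤ c * y₀ * s * (1 - s) :=
        mul_nonneg (mul_nonneg (mul_nonneg hc0.le hy0.le) hs0.le)
          (by linarith)
      have h2 : 0 ≤ c * c * (1 - s) :=
        mul_nonneg (mul_nonneg hc0.le hc0.le) (by linarith)
      have h3 : 0 ≤ 4 * c * (Real.sqrt A' - (y₀ - c) * s) :=
        mul_nonneg (by linarith) (by linarith [l2])
      have hexpand : (Real.sqrt A' + 2 * c) ^ 2 =
          Real.sqrt A' ^ 2 + 4 * c * Real.sqrt A' + 4 * c ^ 2 := by ring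
      rw [hA, hexpand, hsq]
      linarith [h1, h2, h3, hA']
    calc Real.sqrt A ≤ Real.sqrt ((Real.sqrt A' + 2 * c) ^ 2) :=
          Real.sqrt_le_sqrt key
      _ = Real.sqrt A' + 2 * c := Real.sqrt_sq
          (by positivity)
  -- Part 2 key : 2c(s-u) ≤ sqrt A - sqrt A'
  have part2 : 2 * c * (s - u) ≤ Real.sqrt A - Real.sqrt A' := by
    have hcys : 0 ≤ c * y₀ * s ^ 2 :=
      mul_nonneg (mul_nonneg hc0.le hy0.le) (sq_nonneg s)
    have hAA' : A' ≤ A := by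
      rw [hA, hA']
      have h : (y₀ + c) ^ 2 * s ^ 2 - (y₀ - c) ^ 2 * s ^ 2
          = 4 * (c * y₀ * s ^ 2) := by ring
      linarith
    have hmono : Real.sqrt A' ≤ Real.sqrt A := Real.sqrt_le_sqrt hAA'
    rcases le_or_gt s u with h | h
    · have hle : 2 * c * (s - u) ≤ 0 :=
        mul_nonpos_of_nonneg_of_nonpos (by linarith) (by linarith)
      linarith
    · have hSpos : 0 < Real.sqrt A + Real.sqrt A' := by
        have h1 : 0 < (y₀ + c) * s := mul_pos (by linarith) hs0
        linarith [l1, Real.sqrt_nonneg A']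
      have hprod : (Real.sqrt A - Real.sqrt A') * (Real.sqrt A + Real.sqrt A')
          = A - A' := by
        have hsqA : Real.sqrt A ^ 2 = A := Real.sq_sqrt hA0
        have hsqA' : Real.sqrt A' ^ 2 = A' := Real.sq_sqrt hA'0
        linear_combination hsqA - hsqA'
      have hdiff : A - A' = 4 * (c * y₀ * s ^ 2) := by rw [hA, hA']; ring
      have h1 : 2 * c * (s - u) * (Real.sqrt A + Real.sqrt A')
          ≤ 2 * c * (s - u) * (2 * y₀ * (s + u)) :=
        mul_le_mul_of_nonneg_left hsum
          (mul_nonneg (by linarith) (by linarith))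
      have h2 : 2 * c * (s - u) * (2 * y₀ * (s + u)) ≤ 4 * (c * y₀ * s ^ 2) := by
        have hid : 2 * c * (s - u) * (2 * y₀ * (s + u))
            = 4 * (c * y₀ * s ^ 2) - 4 * (c * y₀ * u ^ 2) := by ring
        have hcyu : 0 ≤ c * y₀ * u ^ 2 :=
          mul_nonneg (mul_nonneg hc0.le hy0.le) (sq_nonneg u)
        linarith
      have h3 : 2 * c * (s - u) * (Real.sqrt A + Real.sqrt A')
          ≤ (Real.sqrt A - Real.sqrt A') * (Real.sqrt A + Real.sqrt A') := by
        rw [hprod, hdiff]; linarith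
      exact le_of_mul_le_mul_right h3 hSpos
  constructor
  · linarith
  · have hK : α * σ * r / (k * (y₀ ^ 2 - σ ^ 2 * r ^ 2 / 4)) *
        (Real.exp (k * τ / 2) - s) = 2 * c * u := by
      have hD' : y₀ ^ 2 - σ ^ 2 * r ^ 2 / 4 = D := by rw [hD, hc]; ring
      have hexp' : Real.exp (k * τ / 2) = 1 / s := by
        rw [eq_div_iff hs0.ne']; exact hexp
      rw [hD', hexp', hu, hv, hB, hc]
      have hk' : k ≠ 0 := hk.ne'
      have hs' : s ≠ 0 := hs0.ne'
      have hD'' : D ≠ 0 := hD0.ne'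
      field_simp
    have hσr : σ * r = 2 * c := by rw [hc]; ring
    rw [hσr, hK]
    linarith
end

section
/- Let α ≥ 0, k > 0, σ > 0, r > 0, t₀ ≥ 0 and y₀ > σr/2. Define z±(t) = [(y₀ ± (σ/2)r)² e^{−k(t−t₀)} + (2α/k)(1 − e^{−k(t−t₀)})]^{1/2}. Then for all t ≥ t₀: z⁺(t) − z⁻(t) = 2 y₀ σ r e^{−k(t−t₀)} / (z⁺(t) + z⁻(t)), and z⁺(t) − z⁻(t) ≥ σr·e^{−k(t−t₀)/2}·(1 − α(e^{k(t−t₀)} − 1)/(k(y₀² − σ²r²/4))). -/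
set_option maxHeartbeats 1000000

lemma sqrt_add_le_aux {x m : ℝ} (hx : 0 < x) (hm : 0 ≤ m) :
    Real.sqrt (x + m) ≤ Real.sqrt x + m / (2 * Real.sqrt x) := by
  have hsx : 0 < Real.sqrt x := Real.sqrt_pos.2 hx
  have hsq : Real.sqrt x ^ 2 = x := Real.sq_sqrt hx.le
  have h1 : x + m ≤ (Real.sqrt x + m / (2 * Real.sqrt x)) ^ 2 := by
    have h2 : Real.sqrt x * (m / (2 * Real.sqrt x)) = m / 2 := by
      field_simp
    nlinarith [sq_nonneg (m / (2 * Real.sqrt x))]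
  calc Real.sqrt (x + m) ≤ Real.sqrt ((Real.sqrt x + m / (2 * Real.sqrt x)) ^ 2) :=
        Real.sqrt_le_sqrt h1
    _ = Real.sqrt x + m / (2 * Real.sqrt x) := by
        rw [Real.sqrt_sq (by positivity)]

theorem stmt_11 (α k σ r t₀ y₀ : ℝ) (hα : 0 ≤ α) (hk : 0 < k) (hσ : 0 < σ)
    (hr : 0 < r) (ht₀ : 0 ≤ t₀) (hy₀ : σ * r / 2 < y₀) :
    let zplus : ℝ → ℝ := fun t =>
      Real.sqrt ((y₀ + σ / 2 * r) ^ 2 * Real.exp (-(k * (t - t₀))) +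
        2 * α / k * (1 - Real.exp (-(k * (t - t₀)))))
    let zminus : ℝ → ℝ := fun t =>
      Real.sqrt ((y₀ - σ / 2 * r) ^ 2 * Real.exp (-(k * (t - t₀))) +
        2 * α / k * (1 - Real.exp (-(k * (t - t₀)))))
    ∀ t, t₀ ≤ t →
      zplus t - zminus t =
        2 * y₀ * σ * r * Real.exp (-(k * (t - t₀))) / (zplus t + zminus t) ∧
      σ * r * Real.exp (-(k * (t - t₀)) / 2) *
          (1 - α * (Real.exp (k * (t - t₀)) - 1) / (k * (y₀ ^ 2 - σ ^ 2 * r ^ 2 / 4)))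
        ≤ zplus t - zminus t := by
  intro zplus zminus t ht
  set τ := k * (t - t₀) with hτdef
  have hτ : 0 ≤ τ := mul_nonneg hk.le (by linarith)
  set E := Real.exp (-τ) with hEdef
  set sE := Real.exp (-τ / 2) with hsEdef
  have hE : 0 < E := Real.exp_pos _
  have hsE : 0 < sE := Real.exp_pos _
  have hE1 : E ≤ 1 := Real.exp_le_one_iff.2 (by linarith)
  have hEs : E = sE ^ 2 := by
    rw [hEdef, hsEdef, sq, ← Real.exp_add]; ring_nf
  have hprod : Real.exp τ * sE ^ 2 = 1 := by
    rw [← hEs, hEdef, ← Real.exp_add]; simp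
  have hc : 0 < σ / 2 * r := by positivity
  have hyc : σ / 2 * r < y₀ := by linarith [hy₀]
  set c := σ / 2 * r with hcdef
  set m := 2 * α / k * (1 - E) with hmdef
  have hm : 0 ≤ m := by
    apply mul_nonneg (by positivity) (by linarith)
  have hxp : 0 < (y₀ + c) ^ 2 * E := mul_pos (pow_pos (by linarith) 2) hE
  have hxm : 0 < (y₀ - c) ^ 2 * E := by
    exact mul_pos (pow_pos (by linarith) 2) hE
  have ha : 0 < (y₀ + c) ^ 2 * E + m := by linarith
  have hb : 0 < (y₀ - c) ^ 2 * E + m := by linarith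
  have hzp : zplus t = Real.sqrt ((y₀ + c) ^ 2 * E + m) := rfl
  have hzm : zminus t = Real.sqrt ((y₀ - c) ^ 2 * E + m) := rfl
  have hzp2 : zplus t ^ 2 = (y₀ + c) ^ 2 * E + m := by
    rw [hzp]; exact Real.sq_sqrt ha.le
  have hzm2 : zminus t ^ 2 = (y₀ - c) ^ 2 * E + m := by
    rw [hzm]; exact Real.sq_sqrt hb.le
  have hzppos : 0 < zplus t := by rw [hzp]; exact Real.sqrt_pos.2 ha
  have hzmpos : 0 < zminus t := by rw [hzm]; exact Real.sqrt_pos.2 hb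
  have hS : 0 < zplus t + zminus t := by linarith
  have hdiffsq : (zplus t - zminus t) * (zplus t + zminus t) = 2 * y₀ * σ * r * E := by
    have : (zplus t - zminus t) * (zplus t + zminus t) = zplus t ^ 2 - zminus t ^ 2 := by ring
    rw [this, hzp2, hzm2, hcdef]; ring
  have part1 : zplus t - zminus t = 2 * y₀ * σ * r * E / (zplus t + zminus t) := by
    rw [eq_div_iff hS.ne']; exact hdiffsq
  refine ⟨part1, ?_⟩
  -- part 2
  have hdiffnn : 0 ≤ zplus t - zminus t := by
    have : zminus t ≤ zplus t := by
      rw [hzp, hzm]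
      apply Real.sqrt_le_sqrt
      nlinarith [mul_nonneg (mul_nonneg hc.le (by linarith : (0:ℝ) ≤ y₀)) hE.le]
    linarith
  set u := α * (Real.exp τ - 1) / (k * (y₀ ^ 2 - σ ^ 2 * r ^ 2 / 4)) with hudef
  have hden : 0 < k * (y₀ ^ 2 - σ ^ 2 * r ^ 2 / 4) := by
    have h1 : 0 < (y₀ - c) * (y₀ + c) := mul_pos (by linarith) (by linarith)
    have h2 : k * (y₀ ^ 2 - σ ^ 2 * r ^ 2 / 4) = k * ((y₀ - c) * (y₀ + c)) := by
      rw [hcdef]; ring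
    rw [h2]; exact mul_pos hk h1
  have hexpτ : 1 ≤ Real.exp τ := Real.one_le_exp hτ
  have hu : 0 ≤ u := by
    apply div_nonneg (mul_nonneg hα (by linarith)) hden.le
  -- sqrt of (y₀±c)^2 * E
  have hsqE : Real.sqrt E = sE := by
    rw [hEs, Real.sqrt_sq hsE.le]
  have hsqp : Real.sqrt ((y₀ + c) ^ 2 * E) = (y₀ + c) * sE := by
    rw [Real.sqrt_mul (by positivity), Real.sqrt_sq (by linarith), hsqE]
  have hsqm : Real.sqrt ((y₀ - c) ^ 2 * E) = (y₀ - c) * sE := by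
    rw [Real.sqrt_mul (by positivity), Real.sqrt_sq (by linarith), hsqE]
  have hbp : zplus t ≤ (y₀ + c) * sE + m / (2 * ((y₀ + c) * sE)) := by
    rw [hzp]
    calc Real.sqrt ((y₀ + c) ^ 2 * E + m)
        ≤ Real.sqrt ((y₀ + c) ^ 2 * E) + m / (2 * Real.sqrt ((y₀ + c) ^ 2 * E)) :=
          sqrt_add_le_aux hxp hm
      _ = (y₀ + c) * sE + m / (2 * ((y₀ + c) * sE)) := by rw [hsqp]
  have hbm : zminus t ≤ (y₀ - c) * sE + m / (2 * ((y₀ - c) * sE)) := by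
    rw [hzm]
    calc Real.sqrt ((y₀ - c) ^ 2 * E + m)
        ≤ Real.sqrt ((y₀ - c) ^ 2 * E) + m / (2 * Real.sqrt ((y₀ - c) ^ 2 * E)) :=
          sqrt_add_le_aux hxm hm
      _ = (y₀ - c) * sE + m / (2 * ((y₀ - c) * sE)) := by rw [hsqm]
  have hsum_eq : (y₀ + c) * sE + m / (2 * ((y₀ + c) * sE)) +
      ((y₀ - c) * sE + m / (2 * ((y₀ - c) * sE))) = 2 * y₀ * sE * (1 + u) := by
    have hpc : (0:ℝ) < y₀ + c := by linarith
    have hmc : (0:ℝ) < y₀ - c := by linarith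
    have hτexp : Real.exp τ = 1 / sE ^ 2 := by
      rw [eq_div_iff (by positivity)]; exact hprod
    have hy2 : y₀ ^ 2 - σ ^ 2 * r ^ 2 / 4 = (y₀ + c) * (y₀ - c) := by rw [hcdef]; ring
    rw [hudef, hmdef, hEs, hτexp, hy2]
    field_simp [hpc.ne', hmc.ne', hsE.ne', hk.ne']
    ring
  have hSle : zplus t + zminus t ≤ 2 * y₀ * sE * (1 + u) := by
    calc zplus t + zminus t ≤ (y₀ + c) * sE + m / (2 * ((y₀ + c) * sE)) +
        ((y₀ - c) * sE + m / (2 * ((y₀ - c) * sE))) := by linarith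
      _ = 2 * y₀ * sE * (1 + u) := hsum_eq
  have hS2 : 0 < 2 * y₀ * sE * (1 + u) := by
    have : 0 < y₀ := by linarith
    have : 0 < 1 + u := by linarith
    positivity
  have key : σ * r * sE * (1 - u) * (2 * y₀ * sE * (1 + u)) ≤
      (zplus t - zminus t) * (2 * y₀ * sE * (1 + u)) := by
    have h1 : (zplus t - zminus t) * (zplus t + zminus t) ≤
        (zplus t - zminus t) * (2 * y₀ * sE * (1 + u)) :=
      mul_le_mul_of_nonneg_left hSle hdiffnn
    have h2 : σ * r * sE * (1 - u) * (2 * y₀ * sE * (1 + u)) ≤ 2 * y₀ * σ * r * E := by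
      rw [hEs]
      have hy : 0 < y₀ := by linarith
      have hring : 2 * y₀ * σ * r * sE ^ 2 - σ * r * sE * (1 - u) * (2 * y₀ * sE * (1 + u)) =
          2 * y₀ * σ * r * sE ^ 2 * u ^ 2 := by ring
      have hnn : 0 ≤ 2 * y₀ * σ * r * sE ^ 2 * u ^ 2 :=
        mul_nonneg (mul_nonneg (mul_nonneg (mul_nonneg (by linarith : (0:ℝ) ≤ 2 * y₀) hσ.le) hr.le)
          (sq_nonneg sE)) (sq_nonneg u)
      linarith
    linarith [hdiffsq]
  have := le_of_mul_le_mul_right (by linarith [key] : σ * r * sE * (1 - u) * (2 * y₀ * sE * (1 + u)) ≤ (zplus t - zminus t) * (2 * y₀ * sE * (1 + u))) hS2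
  calc σ * r * Real.exp (-τ / 2) * (1 - u) = σ * r * sE * (1 - u) := by rw [hsEdef]
    _ ≤ zplus t - zminus t := this
end

section
/- (Induction core of Theorem 8.) Let σ > 0, k > 0, D₁ > 0, D₂ > 0, T > 0, η > 0, and set r₀ = min(η/σ, η/((D₁ + D₂/η²)·T)). Let 0 < r < r₀. Let (y_m)_{m≥0}, (ȳ_m)_{m≥0} be sequences of reals and (Δ_m)_{m≥0} a sequence of nonnegative reals with Σ_{m=0}^{n} Δ_m ≤ T for every n ≥ 0. Assume y_m ≥ 2η for all m, ȳ₀ = y₀, and for every n ≥ 0, |y_{n+1} − ȳ_{n+1}| ≤ r·Σ_{m=0}^{n} (D₁ + D₂/ȳ_m²)·Δ_m. Then ȳ_m ≥ η ≥ rσ for all m ≥ 0, and |y_{n+1} − ȳ_{n+1}| ≤ r·(D₁ + D₂/η²)·T for every n ≥ 0. -/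
theorem stmt_13 (σ k D₁ D₂ T η r : ℝ) (hσ : 0 < σ) (hk : 0 < k)
    (hD₁ : 0 < D₁) (hD₂ : 0 < D₂) (hT : 0 < T) (hη : 0 < η)
    (hr : 0 < r) (hr₀ : r < min (η / σ) (η / ((D₁ + D₂ / η ^ 2) * T)))
    (y ybar : ℕ → ℝ) (Δ : ℕ → ℝ) (hΔ : ∀ m, 0 ≤ Δ m)
    (hΔT : ∀ n, ∑ m ∈ Finset.range (n + 1), Δ m ≤ T)
    (hy : ∀ m, 2 * η ≤ y m) (h0 : ybar 0 = y 0)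
    (herr : ∀ n, |y (n + 1) - ybar (n + 1)| ≤
      r * ∑ m ∈ Finset.range (n + 1), (D₁ + D₂ / (ybar m) ^ 2) * Δ m) :
    (∀ m, η ≤ ybar m) ∧ r * σ ≤ η ∧
    (∀ n, |y (n + 1) - ybar (n + 1)| ≤ r * (D₁ + D₂ / η ^ 2) * T) := by
  set C := D₁ + D₂ / η ^ 2 with hCdef
  have hC : 0 < C := by positivity
  have hrCT : r * (C * T) < η := by
    have h := lt_of_lt_of_le hr₀ (min_le_right _ _)
    have hCT : 0 < C * T := by positivity
    calc r * (C * T) < η / (C * T) * (C * T) := by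
          exact mul_lt_mul_of_pos_right h hCT
      _ = η := div_mul_cancel₀ _ (ne_of_gt hCT)
  -- sum bound given pointwise lower bound on ybar
  have key : ∀ n, (∀ m < n + 1, η ≤ ybar m) →
      r * ∑ m ∈ Finset.range (n + 1), (D₁ + D₂ / (ybar m) ^ 2) * Δ m ≤ r * (C * T) := by
    intro n hb
    have hsum : ∑ m ∈ Finset.range (n + 1), (D₁ + D₂ / (ybar m) ^ 2) * Δ m ≤
        ∑ m ∈ Finset.range (n + 1), C * Δ m := by
      apply Finset.sum_le_sum
      intro m hm
      have hbm : η ≤ ybar m := hb m (Finset.mem_range.mp hm)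
      have : D₂ / (ybar m) ^ 2 ≤ D₂ / η ^ 2 := by
        apply div_le_div_of_nonneg_left hD₂.le (by positivity)
        exact pow_le_pow_left₀ hη.le hbm 2
      exact mul_le_mul_of_nonneg_right (by linarith) (hΔ m)
    calc r * ∑ m ∈ Finset.range (n + 1), (D₁ + D₂ / (ybar m) ^ 2) * Δ m
        ≤ r * ∑ m ∈ Finset.range (n + 1), C * Δ m := by
          exact mul_le_mul_of_nonneg_left hsum hr.le
      _ = r * (C * ∑ m ∈ Finset.range (n + 1), Δ m) := by
          rw [← Finset.mul_sum]
      _ ≤ r * (C * T) := by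
          exact mul_le_mul_of_nonneg_left
            (mul_le_mul_of_nonneg_left (hΔT n) hC.le) hr.le
  have hbar : ∀ m, η ≤ ybar m := by
    intro m
    induction m using Nat.strong_induction_on with
    | _ m ih =>
      match m with
      | 0 => rw [h0]; linarith [hy 0]
      | n + 1 =>
        have herr' := (herr n).trans (key n (fun m hm => ih m hm))
        have habs := abs_le.mp (herr'.trans hrCT.le)
        have := hy (n + 1)
        linarith [habs.1, habs.2]
  refine ⟨hbar, ?_, ?_⟩
  · have h := lt_of_lt_of_le hr₀ (min_le_left _ _)
    have : r * σ < η / σ * σ := mul_lt_mul_of_pos_right h hσ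
    rw [div_mul_cancel₀ _ (ne_of_gt hσ)] at this
    linarith
  · intro n
    have := (herr n).trans (key n (fun m _ => hbar m))
    linarith [this]
end
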